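/- arXiv:2009.08967 — 4 statements merged into one kernel-verified Lean document; each statement's English description precedes it below -/
import Mathlib

section
/- For every δ > 0 and ε > 0 there exists a positive integer d = d(δ, ε) such that for every finite d-quasirandom group G and any three subsets A, B, C of G each of size at least δ·|G|, the number of triples (a, b, c) ∈ A × B × C with a·b = c is strictly greater than (1−ε)·|A|·|B|·|C|/|G|. -/
open scoped ComplexConjugate
open Finset

/-- A group `G` is `d`-quasirandom if every non-trivial finite-dimensional complex
representation of `G` has degree at least `d`. -/
def IsQuasirandom (G : Type*) [Group G] (d : ℕ) : Prop :=
  ∀ (V : Type) [AddCommGroup V] [Module ℂ V] [FiniteDimensional ℂ V],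
    ∀ ρ : G →* LinearMap.GeneralLinearGroup ℂ V, ρ ≠ 1 → d ≤ Module.finrank ℂ V

noncomputable section

variable {G : Type} [Group G] [Fintype G] [DecidableEq G]

/-- Kernel operator on `EuclideanSpace ℂ G`. -/
def kOp (K : G → G → ℂ) : EuclideanSpace ℂ G →ₗ[ℂ] EuclideanSpace ℂ G where
  toFun g := WithLp.toLp 2 (fun x => ∑ y, K x y * g y)
  map_add' u v := PiLp.ext fun x => by
    simp [PiLp.add_apply, mul_add, Finset.sum_add_distrib]
  map_smul' c u := PiLp.ext fun x => by
    simp only [PiLp.smul_apply, smul_eq_mul, RingHom.id_apply, Finset.mul_sum]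
    exact Finset.sum_congr rfl fun y _ => by ring

lemma kOp_apply (K : G → G → ℂ) (g : EuclideanSpace ℂ G) (x : G) :
    kOp K g x = ∑ y, K x y * g y := rfl

/-- right translation as a linear equiv -/
def rT (h : G) : EuclideanSpace ℂ G ≃ₗ[ℂ] EuclideanSpace ℂ G where
  toFun v := WithLp.toLp 2 (fun x => v (x * h))
  invFun v := WithLp.toLp 2 (fun x => v (x * h⁻¹))
  map_add' u v := PiLp.ext fun x => by simp [PiLp.add_apply]
  map_smul' c u := PiLp.ext fun x => by simp [PiLp.smul_apply]
  left_inv v := PiLp.ext fun x => by show v (x * h⁻¹ * h) = v x; rw [inv_mul_cancel_right]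
  right_inv v := PiLp.ext fun x => by show v (x * h * h⁻¹) = v x; rw [mul_inv_cancel_right]

lemma rT_apply (h : G) (v : EuclideanSpace ℂ G) (x : G) : rT h v x = v (x * h) := rfl

lemma adjoint_kOp (K : G → G → ℂ) :
    LinearMap.adjoint (kOp K) = kOp (fun x y => conj (K y x)) := by
  symm
  rw [LinearMap.eq_adjoint_iff]
  intro u v
  simp only [PiLp.inner_apply, kOp_apply, RCLike.inner_apply', map_sum, map_mul,
    Finset.sum_mul, Finset.mul_sum, RingHomCompTriple.comp_apply, Complex.conj_conj]
  rw [Finset.sum_comm]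
  refine Finset.sum_congr rfl fun y _ => Finset.sum_congr rfl fun x _ => by simp; ring

lemma kOp_comm_rT (K : G → G → ℂ) (hK : ∀ x y h, K (x * h) (y * h) = K x y) (h : G)
    (v : EuclideanSpace ℂ G) : kOp K (rT h v) = rT h (kOp K v) := by
  ext x
  rw [rT_apply, kOp_apply, kOp_apply]
  rw [← Equiv.sum_comp (Equiv.mulRight h) (fun y => K (x*h) y * v y)]
  refine Finset.sum_congr rfl fun y _ => by
    simp [Equiv.mulRight, hK, rT_apply]

set_option linter.unusedSectionVars false

/-- convolution operator with kernel `f (x * y⁻¹)` -/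
def Tf (f : G → ℂ) : EuclideanSpace ℂ G →ₗ[ℂ] EuclideanSpace ℂ G :=
  kOp (fun x y => f (x * y⁻¹))

def Sf (f : G → ℂ) : EuclideanSpace ℂ G →ₗ[ℂ] EuclideanSpace ℂ G :=
  LinearMap.adjoint (Tf f) ∘ₗ Tf f

lemma inner_Sf (f : G → ℂ) (u v : EuclideanSpace ℂ G) :
    (inner ℂ u (Sf f v) : ℂ) = inner ℂ (Tf f u) (Tf f v) := by
  rw [Sf, LinearMap.comp_apply, LinearMap.adjoint_inner_right]

lemma Sf_symm (f : G → ℂ) : (Sf f).IsSymmetric := by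
  intro u v
  rw [inner_Sf, Sf, LinearMap.comp_apply, LinearMap.adjoint_inner_left]

lemma Tf_comm (f : G → ℂ) (h : G) (v : EuclideanSpace ℂ G) :
    Tf f (rT h v) = rT h (Tf f v) :=
  kOp_comm_rT _ (fun x y k => by group) h v

lemma Sf_comm (f : G → ℂ) (h : G) (v : EuclideanSpace ℂ G) :
    Sf f (rT h v) = rT h (Sf f v) := by
  rw [Sf, LinearMap.comp_apply, LinearMap.comp_apply, Tf_comm, Tf, adjoint_kOp]
  exact kOp_comm_rT _ (fun x y k => by rw [show y * k * (x * k)⁻¹ = y * x⁻¹ by group]) h _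

lemma Tf_const (f : G → ℂ) (hf : ∑ a, f a = 0) (c : ℂ) :
    Tf f (WithLp.toLp 2 (fun _ => c)) = 0 := by
  ext x
  show ∑ y, f (x * y⁻¹) * c = (0 : EuclideanSpace ℂ G) x
  rw [← Finset.sum_mul,
    Fintype.sum_bijective (fun i : G => x * i⁻¹)
      ((Equiv.trans (Equiv.inv G) (Equiv.mulLeft x)).bijective) _ f (fun y => rfl), hf, zero_mul]
  rfl

lemma Sf_const (f : G → ℂ) (hf : ∑ a, f a = 0) (c : ℂ) :
    Sf f (WithLp.toLp 2 (fun _ => c)) = 0 := by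
  rw [Sf, LinearMap.comp_apply, Tf_const f hf, map_zero]

lemma Tf_single (f : G → ℂ) (x : G) :
    Tf f (EuclideanSpace.single x (1:ℂ)) = WithLp.toLp 2 (fun z => f (z * x⁻¹)) := by
  ext z
  show ∑ y, f (z * y⁻¹) * (EuclideanSpace.single x (1:ℂ)) y = f (z * x⁻¹)
  simp [EuclideanSpace.single_apply, mul_ite]

lemma trace_Sf (f : G → ℂ) :
    LinearMap.trace ℂ _ (Sf f) = (((Fintype.card G : ℝ) * ∑ a, ‖f a‖^2 : ℝ) : ℂ) := by
  rw [LinearMap.trace_eq_matrix_trace ℂ (EuclideanSpace.basisFun G ℂ).toBasis]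
  rw [Matrix.trace]
  have : ∀ x : G, (LinearMap.toMatrix (EuclideanSpace.basisFun G ℂ).toBasis
      (EuclideanSpace.basisFun G ℂ).toBasis (Sf f)).diag x
      = ((∑ a, ‖f a‖^2 : ℝ) : ℂ) := by
    intro x
    rw [Matrix.diag_apply, LinearMap.toMatrix_apply,
      OrthonormalBasis.coe_toBasis, OrthonormalBasis.coe_toBasis_repr_apply,
      OrthonormalBasis.repr_apply_apply, EuclideanSpace.basisFun_apply,
      inner_Sf, Tf_single]
    set u : EuclideanSpace ℂ G := WithLp.toLp 2 (fun z => f (z * x⁻¹)) with hu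
    have : (inner ℂ u u : ℂ) = ∑ z : G, (‖f (z * x⁻¹)‖^2 : ℂ) := by
      rw [PiLp.inner_apply]
      exact Finset.sum_congr rfl fun z _ => by
        rw [RCLike.inner_apply', RCLike.conj_mul]; rfl
    rw [this]
    push_cast
    exact Fintype.sum_bijective (fun z : G => z * x⁻¹)
      ((Equiv.mulRight x⁻¹).bijective) _ (fun a => ((‖f a‖ : ℂ))^2) (fun z => rfl)
  rw [Finset.sum_congr rfl fun x _ => this x]
  simp only [Finset.sum_const, Finset.card_univ, nsmul_eq_mul]
  push_cast
  ring

/-- right translation restricted to an invariant submodule, as a representation -/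
def resT (E : Submodule ℂ (EuclideanSpace ℂ G)) (hE : ∀ (h : G), ∀ v ∈ E, rT h v ∈ E) :
    G →* LinearMap.GeneralLinearGroup ℂ E where
  toFun h :=
    { val := LinearMap.restrict (rT h).toLinearMap (hE h)
      inv := LinearMap.restrict (rT h⁻¹).toLinearMap (hE h⁻¹)
      val_inv := by
        refine LinearMap.ext fun v => Subtype.ext ?_
        show rT h (rT h⁻¹ (v : EuclideanSpace ℂ G)) = (v : EuclideanSpace ℂ G)
        ext x
        show (v : EuclideanSpace ℂ G) (x * h * h⁻¹) = (v : EuclideanSpace ℂ G) x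
        rw [mul_inv_cancel_right]
      inv_val := by
        refine LinearMap.ext fun v => Subtype.ext ?_
        show rT h⁻¹ (rT h (v : EuclideanSpace ℂ G)) = (v : EuclideanSpace ℂ G)
        ext x
        show (v : EuclideanSpace ℂ G) (x * h⁻¹ * h) = (v : EuclideanSpace ℂ G) x
        rw [inv_mul_cancel_right] }
  map_one' := by
    refine Units.ext (LinearMap.ext fun v => Subtype.ext ?_)
    show rT 1 (v : EuclideanSpace ℂ G) = (v : EuclideanSpace ℂ G)
    ext x
    show (v : EuclideanSpace ℂ G) (x * 1) = (v : EuclideanSpace ℂ G) x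
    rw [mul_one]
  map_mul' a b := by
    refine Units.ext (LinearMap.ext fun v => Subtype.ext ?_)
    show rT (a * b) (v : EuclideanSpace ℂ G) = rT a (rT b (v : EuclideanSpace ℂ G))
    ext x
    show (v : EuclideanSpace ℂ G) (x * (a * b)) = (v : EuclideanSpace ℂ G) (x * a * b)
    rw [mul_assoc]

/-- key dimension bound: eigenspaces of `Sf f` with nonzero eigenvalue have dim ≥ d. -/
lemma eigen_dim (d : ℕ) (hQ : IsQuasirandom G d) (f : G → ℂ) (hf : ∑ a, f a = 0)
    {μ : ℝ} (hμ : μ ≠ 0) (hne : Module.End.eigenspace (Sf f) (μ : ℂ) ≠ ⊥) :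
    d ≤ Module.finrank ℂ (Module.End.eigenspace (Sf f) (μ : ℂ)) := by
  set E := Module.End.eigenspace (Sf f) (μ : ℂ) with hEdef
  have hE : ∀ (h : G), ∀ v ∈ E, rT h v ∈ E := by
    intro h v hv
    rw [hEdef, Module.End.mem_eigenspace_iff] at hv ⊢
    show Sf f (rT h v) = _
    rw [Sf_comm, hv, map_smul]
  refine hQ E (resT E hE) ?_
  intro hcontra
  obtain ⟨v, hvE, hv0⟩ := Submodule.exists_mem_ne_zero_of_ne_bot hne
  have hconst : ∀ h : G, rT h v = v := by
    intro h
    have h1 : ((resT E hE h).val ⟨v, hvE⟩ : EuclideanSpace ℂ G) = v := by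
      rw [hcontra]; rfl
    have h2 : ((resT E hE h).val ⟨v, hvE⟩ : EuclideanSpace ℂ G) = rT h v := rfl
    exact h2.symm.trans h1
  have hvc : v = WithLp.toLp 2 (fun _ => v 1) := by
    ext x
    have := congrArg (fun w : EuclideanSpace ℂ G => w 1) (hconst x)
    rw [rT_apply, one_mul] at this
    exact this
  have : Sf f v = 0 := by rw [hvc]; exact Sf_const f hf (v 1)
  have hev : Sf f v = (μ : ℂ) • v := (Module.End.mem_eigenspace_iff).mp hvE
  rw [this] at hev
  rcases smul_eq_zero.mp hev.symm with h | h
  · exact hμ (by exact_mod_cast h)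
  · exact hv0 h

lemma core (d : ℕ) (hd : 0 < d) (hQ : IsQuasirandom G d) (f : G → ℂ) (hf : ∑ a, f a = 0)
    (g : EuclideanSpace ℂ G) :
    ‖Tf f g‖^2 ≤ (Fintype.card G : ℝ) * (∑ a, ‖f a‖^2) / d * ‖g‖^2 := by
  classical
  have hn : Module.finrank ℂ (EuclideanSpace ℂ G) = Fintype.card G := finrank_euclideanSpace
  have hS := Sf_symm (G := G) f
  set b := hS.eigenvectorBasis hn with hb
  set μ := hS.eigenvalues hn with hμdef
  have happ : ∀ i, Sf f (b i) = (μ i : ℂ) • b i := fun i => hS.apply_eigenvectorBasis hn i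
  have hbb : ∀ i, (inner ℂ (b i) (b i) : ℂ) = 1 := by
    intro i
    have := orthonormal_iff_ite.mp b.orthonormal i i
    simpa using this
  have hμ0 : ∀ i, 0 ≤ μ i := by
    intro i
    have h1 : (inner ℂ (b i) (Sf f (b i)) : ℂ) = (μ i : ℂ) := by
      rw [happ, inner_smul_right, hbb, mul_one]
    have h2 : (inner ℂ (b i) (Sf f (b i)) : ℂ) = ((‖Tf f (b i)‖^2 : ℝ) : ℂ) := by
      rw [inner_Sf, inner_self_eq_norm_sq_to_K]; norm_cast
    have h3 : μ i = ‖Tf f (b i)‖^2 := Complex.ofReal_inj.mp (h1.symm.trans h2)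
    rw [h3]; positivity
  have hsum : ∑ i, μ i = (Fintype.card G : ℝ) * ∑ a, ‖f a‖^2 := by
    have t1 : LinearMap.trace ℂ _ (Sf f) = ∑ i, (μ i : ℂ) := by
      rw [LinearMap.trace_eq_matrix_trace ℂ b.toBasis, Matrix.trace]
      refine Finset.sum_congr rfl fun i _ => ?_
      rw [Matrix.diag_apply, LinearMap.toMatrix_apply, OrthonormalBasis.coe_toBasis,
        OrthonormalBasis.coe_toBasis_repr_apply, OrthonormalBasis.repr_apply_apply, happ,
        inner_smul_right, hbb, mul_one]
    have t2 := trace_Sf (G := G) f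
    rw [t1] at t2
    have : ((∑ i, μ i : ℝ) : ℂ) = (((Fintype.card G : ℝ) * ∑ a, ‖f a‖^2 : ℝ) : ℂ) := by
      push_cast at t2 ⊢
      exact t2
    exact_mod_cast this
  have hbound : ∀ i, μ i ≤ (Fintype.card G : ℝ) * (∑ a, ‖f a‖^2) / d := by
    intro i
    by_cases h0 : μ i = 0
    · rw [h0]
      have h1 : 0 ≤ ∑ a, ‖f a‖^2 := by positivity
      positivity
    · set E := Module.End.eigenspace (Sf f) ((μ i : ℂ)) with hEdef
      have hmem : b i ∈ E := Module.End.mem_eigenspace_iff.mpr (happ i)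
      have hne : E ≠ ⊥ := by
        intro hbot
        exact b.orthonormal.ne_zero i (by rw [hbot] at hmem; simpa using hmem)
      have hd1 : d ≤ Module.finrank ℂ E := eigen_dim d hQ f hf h0 hne
      set s : Finset (Fin (Fintype.card G)) := Finset.univ.filter (fun j => μ j = μ i) with hs
      have hspan : E ≤ Submodule.span ℂ (↑(s.image b) : Set (EuclideanSpace ℂ G)) := by
        intro v hv
        have hv' : Sf f v = (μ i : ℂ) • v := Module.End.mem_eigenspace_iff.mp hv
        rw [← b.sum_repr v]
        refine Submodule.sum_mem _ fun j _ => ?_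
        by_cases hj : μ j = μ i
        · refine Submodule.smul_mem _ _ (Submodule.subset_span ?_)
          simp only [Finset.coe_image, Set.mem_image, Finset.mem_coe]
          exact ⟨j, by simp [hs, hj], rfl⟩
        · have hz : b.repr v j = 0 := by
            have e1 : (inner ℂ (Sf f (b j)) v : ℂ) = (inner ℂ (b j) (Sf f v) : ℂ) := hS _ _
            rw [happ, hv', inner_smul_left, inner_smul_right, Complex.conj_ofReal] at e1
            have : ((μ j : ℂ) - (μ i : ℂ)) * (inner ℂ (b j) v : ℂ) = 0 := by
              rw [sub_mul]; rw [e1]; ring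
            rcases mul_eq_zero.mp this with h | h
            · exfalso
              apply hj
              have : (μ j : ℂ) = (μ i : ℂ) := by linear_combination h
              exact_mod_cast this
            · rw [OrthonormalBasis.repr_apply_apply]; exact h
          rw [hz, zero_smul]
          exact Submodule.zero_mem _
      have hr1 : Module.finrank ℂ E ≤ s.card := by
        calc Module.finrank ℂ E ≤ Module.finrank ℂ
              (Submodule.span ℂ (↑(s.image b) : Set (EuclideanSpace ℂ G))) :=
            Submodule.finrank_mono hspan
          _ ≤ (s.image b).card := finrank_span_finset_le_card _
          _ ≤ s.card := Finset.card_image_le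
      have hμpos : 0 < μ i := lt_of_le_of_ne (hμ0 i) (Ne.symm h0)
      have hle : μ i * d ≤ ∑ j, μ j := by
        calc μ i * d ≤ μ i * s.card := by
              have : (d : ℝ) ≤ s.card := by exact_mod_cast le_trans hd1 hr1
              exact mul_le_mul_of_nonneg_left this (le_of_lt hμpos)
          _ = ∑ j ∈ s, μ j := by
              rw [Finset.sum_congr rfl (fun j hj => ((Finset.mem_filter.mp hj).2 : μ j = μ i))]
              simp [mul_comm]
              exact Or.inl rfl
          _ ≤ ∑ j, μ j := Finset.sum_le_sum_of_subset_of_nonneg (Finset.subset_univ s)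
              (fun j _ _ => hμ0 j)
      rw [hsum] at hle
      have hdpos : (0:ℝ) < d := by exact_mod_cast hd
      exact (le_div_iff₀ hdpos).mpr hle
  -- expand in eigenbasis
  have hTg : ‖Tf f g‖^2 = ∑ i, μ i * ‖(inner ℂ (b i) g : ℂ)‖^2 := by
    have e0 : ((‖Tf f g‖^2 : ℝ) : ℂ) = (inner ℂ (g : EuclideanSpace ℂ G) (Sf f g) : ℂ) := by
      rw [inner_Sf, inner_self_eq_norm_sq_to_K]; norm_cast
    have e1 : (inner ℂ (g : EuclideanSpace ℂ G) (Sf f g) : ℂ)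
        = ∑ i, (inner ℂ g (b i) : ℂ) * (inner ℂ (b i) (Sf f g) : ℂ) :=
      (b.sum_inner_mul_inner g (Sf f g)).symm
    have e2 : ∀ i, (inner ℂ g (b i) : ℂ) * (inner ℂ (b i) (Sf f g) : ℂ)
        = ((μ i * ‖(inner ℂ (b i) g : ℂ)‖^2 : ℝ) : ℂ) := by
      intro i
      rw [← hS (b i) g, happ, inner_smul_left, Complex.conj_ofReal, ← inner_conj_symm g (b i)]
      rw [show ((starRingEnd ℂ) (inner ℂ (b i) g) * ((μ i : ℂ) * (inner ℂ (b i) g : ℂ)))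
        = (μ i : ℂ) * ((starRingEnd ℂ) (inner ℂ (b i) g) * (inner ℂ (b i) g : ℂ)) from by ring]
      rw [RCLike.conj_mul]
      norm_cast
      exact (Complex.ofReal_mul _ _).symm
    rw [Finset.sum_congr rfl (fun i _ => e2 i)] at e1
    have : ((‖Tf f g‖^2 : ℝ) : ℂ) = ((∑ i, μ i * ‖(inner ℂ (b i) g : ℂ)‖^2 : ℝ) : ℂ) := by
      rw [e0, e1]; norm_cast
    exact_mod_cast this
  have hg : ‖g‖^2 = ∑ i, ‖(inner ℂ (b i) g : ℂ)‖^2 := by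
    have e0 : ((‖g‖^2 : ℝ) : ℂ) = (inner ℂ (g : EuclideanSpace ℂ G) g : ℂ) := by
      rw [inner_self_eq_norm_sq_to_K]; norm_cast
    have e1 : (inner ℂ (g : EuclideanSpace ℂ G) g : ℂ)
        = ∑ i, (inner ℂ g (b i) : ℂ) * (inner ℂ (b i) g : ℂ) := (b.sum_inner_mul_inner g g).symm
    have e2 : ∀ i, (inner ℂ g (b i) : ℂ) * (inner ℂ (b i) g : ℂ)
        = ((‖(inner ℂ (b i) g : ℂ)‖^2 : ℝ) : ℂ) := fun i => by
      rw [← inner_conj_symm g (b i), RCLike.conj_mul]; norm_cast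
    rw [Finset.sum_congr rfl (fun i _ => e2 i)] at e1
    have : ((‖g‖^2 : ℝ) : ℂ) = ((∑ i, ‖(inner ℂ (b i) g : ℂ)‖^2 : ℝ) : ℂ) := by
      rw [e0, e1]; norm_cast
    exact_mod_cast this
  rw [hTg, hg, Finset.mul_sum]
  exact Finset.sum_le_sum fun i _ =>
    mul_le_mul_of_nonneg_right (hbound i) (by positivity)

end

set_option maxHeartbeats 1600000 in
theorem stmt_1 (δ ε : ℝ) (hδ : 0 < δ) (hε : 0 < ε) :
    ∃ d : ℕ, 0 < d ∧
      ∀ (G : Type) [Group G] [Fintype G], IsQuasirandom G d →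
        ∀ A B C : Finset G,
          δ * Fintype.card G ≤ A.card →
          δ * Fintype.card G ≤ B.card →
          δ * Fintype.card G ≤ C.card →
          (1 - ε) * A.card * B.card * C.card / Fintype.card G <
            (Nat.card {p : G × G × G //
              p.1 ∈ A ∧ p.2.1 ∈ B ∧ p.2.2 ∈ C ∧ p.1 * p.2.1 = p.2.2} : ℝ) := by
  classical
  refine ⟨Nat.ceil (1/(δ^3 * ε^2)) + 1, Nat.succ_pos _, ?_⟩
  intro G _ _ hQ A B C hA hB hC
  set d : ℕ := Nat.ceil (1/(δ^3 * ε^2)) + 1 with hd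
  have hdR : 1/(δ^3*ε^2) < (d : ℝ) := by
    have := Nat.le_ceil (1/(δ^3 * ε^2))
    have : (Nat.ceil (1/(δ^3 * ε^2)) : ℝ) < d := by
      rw [hd]; push_cast; linarith
    linarith [Nat.le_ceil (1/(δ^3 * ε^2))]
  have hdpos : (0:ℝ) < d := lt_trans (by positivity) hdR
  set n : ℕ := Fintype.card G with hn
  have hn1 : (1:ℕ) ≤ n := Fintype.card_pos
  have hnR : (1:ℝ) ≤ n := by exact_mod_cast hn1
  have hnpos : (0:ℝ) < n := by linarith
  set a : ℝ := (A.card : ℝ) with ha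
  set b : ℝ := (B.card : ℝ) with hb
  set c : ℝ := (C.card : ℝ) with hc
  have hapos : 0 < a := lt_of_lt_of_le (by positivity) hA
  have hbpos : 0 < b := lt_of_lt_of_le (by positivity) hB
  have hcpos : 0 < c := lt_of_lt_of_le (by positivity) hC
  set α : ℝ := a / n with hα
  -- indicator functions
  set oneB : EuclideanSpace ℂ G := WithLp.toLp 2 (fun t => ((if t ∈ B then (1:ℝ) else 0 : ℝ) : ℂ)) with honeB
  set oneC : EuclideanSpace ℂ G := WithLp.toLp 2 (fun t => ((if t ∈ C then (1:ℝ) else 0 : ℝ) : ℂ)) with honeC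
  set f : G → ℂ := (fun t => (((if t ∈ A then (1:ℝ) else 0) - α : ℝ) : ℂ)) with hfdef
  have hnC : (n:ℂ) ≠ 0 := Nat.cast_ne_zero.mpr (by omega)
  have hf : ∑ t, f t = 0 := by
    rw [hfdef]
    push_cast
    rw [Finset.sum_sub_distrib]
    simp only [apply_ite (Complex.ofReal), Complex.ofReal_one, Complex.ofReal_zero]
    rw [Finset.sum_boole]
    simp only [Finset.filter_univ_mem, Finset.sum_const, Finset.card_univ, nsmul_eq_mul]
    rw [hα, ha, ← hn]
    push_cast
    field_simp
    ring
  -- counting identity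
  have hcount : ((Nat.card {p : G × G × G //
      p.1 ∈ A ∧ p.2.1 ∈ B ∧ p.2.2 ∈ C ∧ p.1 * p.2.1 = p.2.2} : ℕ) : ℂ)
      = ∑ z : G, ∑ y : G,
        (((if z * y⁻¹ ∈ A then (1:ℝ) else 0 : ℝ)) : ℂ) * oneB y * oneC z := by
    have e : {p : G × G // p.1 ∈ A ∧ p.2 ∈ B ∧ p.1 * p.2 ∈ C} ≃
        {p : G × G × G // p.1 ∈ A ∧ p.2.1 ∈ B ∧ p.2.2 ∈ C ∧ p.1 * p.2.1 = p.2.2} :=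
      { toFun := fun q => ⟨(q.1.1, q.1.2, q.1.1 * q.1.2), q.2.1, q.2.2.1, q.2.2.2, rfl⟩
        invFun := fun q => ⟨(q.1.1, q.1.2.1), q.2.1, q.2.2.1, by
          rw [q.2.2.2.2]; exact q.2.2.2.1⟩
        left_inv := fun q => rfl
        right_inv := fun q => Subtype.ext (Prod.ext rfl (Prod.ext rfl q.2.2.2.2)) }
    rw [← Nat.card_congr e, Nat.card_eq_fintype_card, Fintype.card_subtype,
      Finset.card_filter]
    rw [Nat.cast_sum]
    rw [Fintype.sum_prod_type]
    have h1 : ∀ x y : G, ((if (x ∈ A ∧ y ∈ B ∧ x * y ∈ C) then (1:ℕ) else 0 : ℕ) : ℂ)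
        = (((if x ∈ A then (1:ℝ) else 0 : ℝ)) : ℂ) * oneB y * oneC (x * y) := by
      intro x y
      by_cases hx : x ∈ A <;> by_cases hy : y ∈ B <;> by_cases hz : x * y ∈ C <;>
        simp [honeB, honeC, hx, hy, hz]
    calc (∑ x : G, ∑ y : G, ((if (x ∈ A ∧ y ∈ B ∧ x * y ∈ C) then (1:ℕ) else 0 : ℕ) : ℂ))
        = ∑ x : G, ∑ y : G,
            (((if x ∈ A then (1:ℝ) else 0 : ℝ)) : ℂ) * oneB y * oneC (x * y) :=
          Finset.sum_congr rfl fun x _ => Finset.sum_congr rfl fun y _ => h1 x y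
      _ = ∑ p : G × G,
            (((if p.1 ∈ A then (1:ℝ) else 0 : ℝ)) : ℂ) * oneB p.2 * oneC (p.1 * p.2) := by
          rw [Fintype.sum_prod_type]
      _ = ∑ p : G × G,
            (((if p.1 * p.2⁻¹ ∈ A then (1:ℝ) else 0 : ℝ)) : ℂ) * oneB p.2 * oneC p.1 := by
          refine (Fintype.sum_equiv
            (⟨fun p => (p.1 * p.2⁻¹, p.2), fun p => (p.1 * p.2, p.2),
              fun p => by simp, fun p => by simp⟩ : G × G ≃ G × G) _ _ fun p => ?_).symm
          simp only [Equiv.coe_fn_mk]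
          rw [inv_mul_cancel_right]
      _ = ∑ z : G, ∑ y : G,
            (((if z * y⁻¹ ∈ A then (1:ℝ) else 0 : ℝ)) : ℂ) * oneB y * oneC z := by
          rw [Fintype.sum_prod_type]
  -- indicator sums
  have hsumB : ∑ y, oneB y = (b : ℂ) := by
    rw [honeB]
    simp only [apply_ite Complex.ofReal, Complex.ofReal_one, Complex.ofReal_zero]
    rw [Finset.sum_boole]
    simp only [Finset.filter_univ_mem]
    rw [hb]
    push_cast
    rfl
  have hsumC : ∑ z, oneC z = (c : ℂ) := by
    rw [honeC]
    simp only [apply_ite Complex.ofReal, Complex.ofReal_one, Complex.ofReal_zero]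
    rw [Finset.sum_boole]
    simp only [Finset.filter_univ_mem]
    rw [hc]
    push_cast
    rfl
  -- split off the mean
  have hsplit : (∑ z : G, ∑ y : G,
        (((if z * y⁻¹ ∈ A then (1:ℝ) else 0 : ℝ)) : ℂ) * oneB y * oneC z)
      = (inner ℂ (Tf f oneB) oneC : ℂ) + (α : ℂ) * b * c := by
    have hAf : ∀ t : G, (((if t ∈ A then (1:ℝ) else 0 : ℝ)) : ℂ) = f t + (α : ℂ) := by
      intro t; rw [hfdef]; push_cast; ring
    have hTreal : ∀ z, (starRingEnd ℂ) (Tf f oneB z) = Tf f oneB z := by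
      intro z
      have : Tf f oneB z = ∑ y, f (z * y⁻¹) * oneB y := rfl
      rw [this, map_sum]
      refine Finset.sum_congr rfl fun y _ => ?_
      rw [map_mul, hfdef, honeB]
      simp [Complex.conj_ofReal]
    have step : ∀ z : G, (∑ y : G,
          (((if z * y⁻¹ ∈ A then (1:ℝ) else 0 : ℝ)) : ℂ) * oneB y * oneC z)
        = Tf f oneB z * oneC z + (α : ℂ) * (b : ℂ) * oneC z := by
      intro z
      have : ∀ y : G, (((if z * y⁻¹ ∈ A then (1:ℝ) else 0 : ℝ)) : ℂ) * oneB y * oneC z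
          = f (z * y⁻¹) * oneB y * oneC z + (α : ℂ) * oneB y * oneC z := by
        intro y; rw [hAf]; ring
      rw [Finset.sum_congr rfl fun y _ => this y, Finset.sum_add_distrib]
      congr 1
      · have : Tf f oneB z = ∑ y, f (z * y⁻¹) * oneB y := rfl
        rw [this, Finset.sum_mul]
      · have h2 : (∑ y : G, (α:ℂ) * oneB y * oneC z)
            = (α:ℂ) * (∑ y : G, oneB y) * oneC z := by
          rw [Finset.mul_sum, Finset.sum_mul]
        rw [h2, hsumB]
    rw [Finset.sum_congr rfl fun z _ => step z, Finset.sum_add_distrib]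
    congr 1
    · rw [PiLp.inner_apply]
      exact Finset.sum_congr rfl fun z _ => by rw [RCLike.inner_apply', hTreal]
    · rw [← Finset.mul_sum, hsumC]
  -- norms of indicator vectors
  have hb2 : ‖oneB‖^2 = b := by
    have h0 : ((‖oneB‖^2 : ℝ) : ℂ) = (inner ℂ oneB oneB : ℂ) := by
      rw [inner_self_eq_norm_sq_to_K]; norm_cast
    have e : ∀ y : G, (starRingEnd ℂ) (oneB y) * oneB y = oneB y := by
      intro y; rw [honeB]; by_cases hy : y ∈ B <;> simp [hy]
    have h1 : (inner ℂ oneB oneB : ℂ) = (b : ℂ) := by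
      calc (inner ℂ oneB oneB : ℂ) = ∑ y, (starRingEnd ℂ) (oneB y) * oneB y := by
            rw [PiLp.inner_apply]; simp only [RCLike.inner_apply']
        _ = ∑ y, oneB y := Finset.sum_congr rfl fun y _ => e y
        _ = (b : ℂ) := hsumB
    rw [h1] at h0
    exact_mod_cast h0
  have hc2 : ‖oneC‖^2 = c := by
    have h0 : ((‖oneC‖^2 : ℝ) : ℂ) = (inner ℂ oneC oneC : ℂ) := by
      rw [inner_self_eq_norm_sq_to_K]; norm_cast
    have e : ∀ y : G, (starRingEnd ℂ) (oneC y) * oneC y = oneC y := by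
      intro y; rw [honeC]; by_cases hy : y ∈ C <;> simp [hy]
    have h1 : (inner ℂ oneC oneC : ℂ) = (c : ℂ) := by
      calc (inner ℂ oneC oneC : ℂ) = ∑ y, (starRingEnd ℂ) (oneC y) * oneC y := by
            rw [PiLp.inner_apply]; simp only [RCLike.inner_apply']
        _ = ∑ y, oneC y := Finset.sum_congr rfl fun y _ => e y
        _ = (c : ℂ) := hsumC
    rw [h1] at h0
    exact_mod_cast h0
  -- ℓ² mass of f
  have hα0 : 0 ≤ α := by positivity
  have hαn : α * n = a := by rw [hα]; field_simp
  have hF : (∑ t, ‖f t‖^2) ≤ a := by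
    have hft : ∀ t, ‖f t‖^2 = (if t ∈ A then (1-α)^2 else α^2) := by
      intro t
      rw [hfdef]
      rw [Complex.norm_real, Real.norm_eq_abs, sq_abs]
      by_cases ht : t ∈ A <;> simp [ht]
    rw [Finset.sum_congr rfl fun t _ => hft t]
    rw [Finset.sum_ite, Finset.sum_const, Finset.sum_const, Finset.filter_univ_mem]
    have hcard : (Finset.univ.filter (fun t : G => ¬ t ∈ A)).card = n - A.card := by
      rw [Finset.filter_not, Finset.filter_univ_mem]
      rw [Finset.card_sdiff_of_subset (Finset.subset_univ A), Finset.card_univ]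
    rw [hcard]
    simp only [nsmul_eq_mul]
    have hAn : A.card ≤ n := by rw [hn]; exact Finset.card_le_univ A
    rw [Nat.cast_sub hAn, ← ha]
    nlinarith [hαn, hα0, hapos.le, sq_nonneg α]
  -- core spectral bound
  have hdnat : 0 < d := Nat.succ_pos _
  have hcore := core d hdnat hQ f hf oneB
  rw [← hn, hb2] at hcore
  -- Cauchy–Schwarz
  set Nq : ℕ := Nat.card {p : G × G × G //
      p.1 ∈ A ∧ p.2.1 ∈ B ∧ p.2.2 ∈ C ∧ p.1 * p.2.1 = p.2.2} with hNq
  have hCS : ‖((Nq : ℂ) - (α : ℂ) * b * c)‖ ≤ ‖Tf f oneB‖ * ‖oneC‖ := by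
    rw [hcount, hsplit]
    have : (inner ℂ (Tf f oneB) oneC : ℂ) + (α : ℂ) * b * c - (α : ℂ) * b * c
        = (inner ℂ (Tf f oneB) oneC : ℂ) := by ring
    rw [this]
    exact norm_inner_le_norm _ _
  have hNorm : ((Nq : ℂ) - (α : ℂ) * b * c) = (((Nq : ℝ) - α * b * c : ℝ) : ℂ) := by
    push_cast; ring
  have habs : |(Nq : ℝ) - α * b * c| ≤ ‖Tf f oneB‖ * ‖oneC‖ := by
    have := hCS
    rw [hNorm, Complex.norm_real, Real.norm_eq_abs] at this
    exact this
  -- numeric endgame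
  have h1 : |(Nq : ℝ) - α * b * c|^2 ≤ n * a * b * c / d := by
    have e1 : |(Nq : ℝ) - α * b * c|^2 ≤ (‖Tf f oneB‖ * ‖oneC‖)^2 :=
      pow_le_pow_left₀ (abs_nonneg _) habs 2
    have e2 : (‖Tf f oneB‖ * ‖oneC‖)^2 = ‖Tf f oneB‖^2 * c := by
      rw [mul_pow, hc2]
    have e3 : ‖Tf f oneB‖^2 * c ≤ ((n : ℝ) * (∑ t, ‖f t‖^2) / d * b) * c :=
      mul_le_mul_of_nonneg_right hcore hcpos.le
    have e4 : ((n : ℝ) * (∑ t, ‖f t‖^2) / d * b) * c ≤ n * a * b * c / d := by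
      have hq : 0 ≤ (n : ℝ)/d * b * c := by positivity
      have l1 : ((n : ℝ) * (∑ t, ‖f t‖^2) / d * b) * c
          = ((n : ℝ)/d * b * c) * (∑ t, ‖f t‖^2) := by ring
      have l2 : (n : ℝ) * a * b * c / d = ((n : ℝ)/d * b * c) * a := by ring
      rw [l1, l2]
      exact mul_le_mul_of_nonneg_left hF hq
    linarith
  have habc : 0 < a * b * c := by positivity
  have key : (n : ℝ)^3 < d * (ε^2 * (a * b * c)) := by
    have k0 : (0:ℝ) ≤ δ * n := by positivity
    have k1 : (δ*n) * (δ*n) ≤ a * b := mul_le_mul hA hB k0 (le_trans k0 hA)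
    have k2 : ((δ*n) * (δ*n)) * (δ*n) ≤ a * b * c :=
      mul_le_mul k1 hC k0 (le_trans (by positivity) k1)
    have k3 : ε^2 * (δ^3 * (n:ℝ)^3) ≤ ε^2 * (a * b * c) := by
      have : δ^3 * (n:ℝ)^3 = ((δ*n) * (δ*n)) * (δ*n) := by ring
      rw [this]
      exact mul_le_mul_of_nonneg_left k2 (by positivity)
    have k4 : (d:ℝ) * (ε^2 * (δ^3 * (n:ℝ)^3)) ≤ (d:ℝ) * (ε^2 * (a * b * c)) :=
      mul_le_mul_of_nonneg_left k3 hdpos.le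
    have k5 : (1/(δ^3*ε^2)) * (ε^2 * (δ^3 * (n:ℝ)^3)) < (d:ℝ) * (ε^2 * (δ^3 * (n:ℝ)^3)) :=
      mul_lt_mul_of_pos_right hdR (by positivity)
    have k6 : (1/(δ^3*ε^2)) * (ε^2 * (δ^3 * (n:ℝ)^3)) = (n:ℝ)^3 := by field_simp
    linarith
  have h2 : (n:ℝ) * a * b * c / d < (ε * (a * b * c) / n)^2 := by
    have e : (ε * (a * b * c) / n)^2 = ε^2 * (a*b*c)^2 / (n:ℝ)^2 := by ring
    rw [e, div_lt_div_iff₀ hdpos (by positivity : (0:ℝ) < (n:ℝ)^2)]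
    nlinarith [mul_lt_mul_of_pos_right key habc]
  have hpos2 : 0 < ε * (a * b * c) / n := by positivity
  have h3 : |(Nq : ℝ) - α * b * c| < ε * (a * b * c) / n :=
    lt_of_pow_lt_pow_left₀ 2 hpos2.le (lt_of_le_of_lt h1 h2)
  have h4 := (abs_lt.mp h3).1
  have hgoal : (1-ε) * a * b * c / n = α * b * c - ε * (a * b * c) / n := by
    rw [hα]; ring
  show (1 - ε) * a * b * c / (n:ℝ) < (Nq : ℝ)
  linarith
end

section
/- For all positive real numbers δ, ε and η there exists a positive integer d = d(δ, ε, η) such that for every finite d-quasirandom group G and all subsets A and B of G with |A| ≥ δ·|G| and |B| ≥ δ·|G|, the set of elements x ∈ G with |A ∩ xB| < (1−η)·|A|·|B|/|G| has size strictly less than ε·|G|. -/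
open Pointwise

open scoped ComplexOrder

open Matrix in
lemma key_mixing {G : Type} [Group G] [Fintype G] [DecidableEq G] {d : ℕ}
    (hQR : IsQuasirandom G d) (f : G → ℂ) (hf : ∑ y, f y = 0) (v : G → ℂ) :
    (d : ℝ) * ∑ x, ‖∑ z, f (x * z⁻¹) * v z‖ ^ 2 ≤
      ((Fintype.card G : ℝ) * ∑ y, ‖f y‖ ^ 2) * ∑ z, ‖v z‖ ^ 2 := by
  classical
  set K : Matrix G G ℂ := Matrix.of fun x z => f (x * z⁻¹) with hK
  set S : Matrix G G ℂ := Kᴴ * K with hS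
  have hH : S.IsHermitian := Matrix.isHermitian_conjTranspose_mul_self K
  have hnn : ∀ i, 0 ≤ hH.eigenvalues i := Matrix.eigenvalues_conjTranspose_mul_self_nonneg K
  set μ : G → ℝ := hH.eigenvalues with hmu
  set b := hH.eigenvectorBasis with hb
  have hKv_eq : ∀ x, (K *ᵥ v) x = ∑ z, f (x * z⁻¹) * v z := by
    intro x; simp [hK, Matrix.mulVec, dotProduct]
  have hSb : ∀ i, S *ᵥ (b i : G → ℂ) = (μ i : ℝ) • (b i : G → ℂ) :=
    fun i => hH.mulVec_eigenvectorBasis i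
  have hSb' : ∀ i, S *ᵥ (b i : G → ℂ) = fun z => (μ i : ℂ) * (b i : G → ℂ) z := by
    intro i; rw [hSb i]; funext z
    show (μ i : ℝ) • ((b i : G → ℂ) z) = _
    rw [Complex.real_smul]
  -- inner product as dot product
  have inner_dp : ∀ u w : EuclideanSpace ℂ G,
      (inner ℂ u w : ℂ) = dotProduct (star (u : G → ℂ)) (w : G → ℂ) := by
    intro u w; rw [PiLp.inner_apply]; simp only [RCLike.inner_apply']; rfl
  -- (A) action of S on coordinates
  have reprS : ∀ (w : EuclideanSpace ℂ G) (i : G),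
      b.repr (WithLp.toLp 2 (S *ᵥ w : G → ℂ)) i = (μ i : ℂ) * b.repr w i := by
    intro w i
    rw [b.repr_apply_apply, b.repr_apply_apply, inner_dp, inner_dp]
    calc dotProduct (star ((b i : G → ℂ))) (S *ᵥ w)
        = (star ((b i : G → ℂ)) ᵥ* S) ⬝ᵥ w := Matrix.dotProduct_mulVec _ _ _
      _ = star (S *ᵥ (b i : G → ℂ)) ⬝ᵥ w := by rw [Matrix.star_mulVec, hH.eq]
      _ = (μ i : ℂ) * (star ((b i : G → ℂ)) ⬝ᵥ w) := by
          rw [hSb' i]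
          simp [dotProduct, Pi.star_apply, _root_.map_mul, Complex.conj_ofReal,
            Finset.mul_sum, mul_assoc]
  -- dot product identity
  have dp : ∀ w : G → ℂ, star (K *ᵥ w) ⬝ᵥ (K *ᵥ w) = star w ⬝ᵥ (S *ᵥ w) := by
    intro w
    simp only [hS, Matrix.star_mulVec, Matrix.dotProduct_mulVec, Matrix.vecMul_vecMul]
  -- (B) master identity
  have master : ∀ w : EuclideanSpace ℂ G,
      ∑ x, ‖(K *ᵥ (w : G → ℂ)) x‖ ^ 2 = ∑ i, μ i * ‖b.repr w i‖ ^ 2 := by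
    intro w
    apply Complex.ofReal_injective
    push_cast
    calc (∑ x, (‖(K *ᵥ (w : G → ℂ)) x‖ : ℂ) ^ 2)
        = ∑ x, (starRingEnd ℂ) ((K *ᵥ (w : G → ℂ)) x) * (K *ᵥ (w : G → ℂ)) x := by
          refine Finset.sum_congr rfl fun x _ => ?_
          rw [Complex.conj_mul']
      _ = star (K *ᵥ (w : G → ℂ)) ⬝ᵥ (K *ᵥ (w : G → ℂ)) := rfl
      _ = star (w : G → ℂ) ⬝ᵥ (S *ᵥ (w : G → ℂ)) := dp _
      _ = (inner ℂ w (WithLp.toLp 2 (S *ᵥ (w : G → ℂ) : G → ℂ)) : ℂ) := (inner_dp w (WithLp.toLp 2 (S *ᵥ (w : G → ℂ)))).symm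
      _ = (inner ℂ (b.repr w) (b.repr (WithLp.toLp 2 (S *ᵥ (w : G → ℂ) : G → ℂ))) : ℂ) :=
          (b.repr.inner_map_map _ _).symm
      _ = ∑ i, (starRingEnd ℂ) (b.repr w i) * ((μ i : ℂ) * b.repr w i) := by
          rw [PiLp.inner_apply]
          refine Finset.sum_congr rfl fun i _ => ?_
          rw [reprS, RCLike.inner_apply']
      _ = ∑ i, (μ i : ℂ) * (‖b.repr w i‖ : ℂ) ^ 2 := by
          refine Finset.sum_congr rfl fun i _ => ?_
          rw [← mul_assoc, mul_comm ((starRingEnd ℂ) _), mul_assoc, Complex.conj_mul']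
  -- (C) Parseval
  have parseval : ∀ w : EuclideanSpace ℂ G,
      ∑ z, ‖(w : G → ℂ) z‖ ^ 2 = ∑ i, ‖b.repr w i‖ ^ 2 := by
    intro w
    apply Complex.ofReal_injective
    push_cast
    calc (∑ z, (‖(w : G → ℂ) z‖ : ℂ) ^ 2)
        = ∑ z, (starRingEnd ℂ) ((w : G → ℂ) z) * (w : G → ℂ) z := by
          refine Finset.sum_congr rfl fun z _ => ?_
          rw [Complex.conj_mul']
      _ = (inner ℂ w w : ℂ) := (inner_dp w w).symm
      _ = (inner ℂ (b.repr w) (b.repr w) : ℂ) := (b.repr.inner_map_map _ _).symm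
      _ = ∑ i, (starRingEnd ℂ) (b.repr w i) * (b.repr w i) := by rw [PiLp.inner_apply]; simp only [RCLike.inner_apply']
      _ = ∑ i, (‖b.repr w i‖ : ℂ) ^ 2 := by
          refine Finset.sum_congr rfl fun i _ => ?_
          rw [Complex.conj_mul']
  -- (D) trace identity
  have traceμ : ∑ i, μ i = (Fintype.card G : ℝ) * ∑ y, ‖f y‖ ^ 2 := by
    have tr1 : (∑ i, ((μ i : ℝ) : ℂ)) = Matrix.trace S := by
      rw [hH.trace_eq_sum_eigenvalues]
      rfl
    have tr2 : Matrix.trace S = ∑ i, ∑ x, (‖f (x * i⁻¹)‖ : ℂ) ^ 2 := by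
      rw [Matrix.trace]
      refine Finset.sum_congr rfl fun i _ => ?_
      show (Kᴴ * K) i i = _
      rw [Matrix.mul_apply]
      refine Finset.sum_congr rfl fun x _ => ?_
      rw [Matrix.conjTranspose_apply,
        show star (K x i) = (starRingEnd ℂ) (K x i) from rfl, Complex.conj_mul']
      rfl
    have tr3 : ∑ i, μ i = ∑ i : G, ∑ x : G, ‖f (x * i⁻¹)‖ ^ 2 := by
      apply Complex.ofReal_injective
      push_cast
      rw [tr1, tr2]
      try push_cast
      try rfl
    rw [tr3]
    have tr4 : ∀ i : G, ∑ x : G, ‖f (x * i⁻¹)‖ ^ 2 = ∑ y, ‖f y‖ ^ 2 := by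
      intro i
      exact Fintype.sum_equiv (Equiv.mulRight i⁻¹) _ _ (fun x => rfl)
    simp_rw [tr4]
    rw [Finset.sum_const, nsmul_eq_mul]
    simp
  -- max eigenvalue
  obtain ⟨i0, hi0⟩ : ∃ i0, ∀ i, μ i ≤ μ i0 := Finite.exists_max μ
  rcases le_or_gt (μ i0) 0 with hneg | hpos
  · have hz : ∀ i, μ i = 0 := fun i => le_antisymm ((hi0 i).trans hneg) (hnn i)
    have h0 : ∑ x, ‖∑ z, f (x * z⁻¹) * v z‖ ^ 2 = 0 := by
      calc ∑ x, ‖∑ z, f (x * z⁻¹) * v z‖ ^ 2 = ∑ x, ‖(K *ᵥ v) x‖ ^ 2 := by simp_rw [hKv_eq]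
        _ = ∑ i, μ i * ‖b.repr (WithLp.toLp 2 v) i‖ ^ 2 := master (WithLp.toLp 2 v)
        _ = 0 := by simp [hz]
    rw [h0, mul_zero]
    positivity
  · -- the top eigenspace
    set E := Module.End.eigenspace (Matrix.toEuclideanLin S) ((μ i0 : ℂ)) with hE
    have memE : ∀ w : EuclideanSpace ℂ G,
        w ∈ E ↔ S *ᵥ (w : G → ℂ) = (μ i0 : ℂ) • (w : G → ℂ) := by
      intro w
      rw [hE, Module.End.mem_eigenspace_iff]
      exact Iff.intro (fun h => congrArg WithLp.ofLp h) (fun h => congrArg (WithLp.toLp 2) h)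
    have Sentry : ∀ x z : G, S x z = ∑ y, (starRingEnd ℂ) (f (y * x⁻¹)) * f (y * z⁻¹) := by
      intro x z
      show (Kᴴ * K) x z = _
      rw [Matrix.mul_apply]
      refine Finset.sum_congr rfl fun y _ => ?_
      rw [Matrix.conjTranspose_apply]
      rfl
    have Sinv : ∀ (h x z : G), S (x * h) (z * h) = S x z := by
      intro h x z
      rw [Sentry, Sentry]
      refine Fintype.sum_equiv (Equiv.mulRight h⁻¹) _ _ fun y => ?_
      simp [_root_.mul_inv_rev, mul_assoc]
    have Srow : ∀ x, ∑ z, S x z = 0 := by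
      intro x
      simp_rw [Sentry]
      rw [Finset.sum_comm]
      refine Finset.sum_eq_zero fun y _ => ?_
      rw [← Finset.mul_sum]
      have he : ∑ z : G, f (y * z⁻¹) = ∑ w, f w :=
        Fintype.sum_equiv ((Equiv.inv G).trans (Equiv.mulLeft y)) _ _ (fun z => rfl)
      rw [he, hf, mul_zero]
    have hinvE : ∀ (h : G) (w : EuclideanSpace ℂ G), w ∈ E →
        WithLp.toLp 2 (fun x => (w : G → ℂ) (x * h)) ∈ E := by
      intro h w hw
      rw [memE] at hw ⊢
      funext x
      have h1 : (S *ᵥ (fun x => (w : G → ℂ) (x * h))) x = (S *ᵥ (w : G → ℂ)) (x * h) := by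
        show (∑ z, S x z * (w : G → ℂ) (z * h)) = ∑ z, S (x * h) z * (w : G → ℂ) z
        refine Fintype.sum_equiv (Equiv.mulRight h) _ _ fun z => ?_
        show S x z * (w : G → ℂ) (z * h) = S (x * h) (z * h) * (w : G → ℂ) (z * h)
        rw [Sinv h x z]
      calc (S *ᵥ (fun x => (w : G → ℂ) (x * h))) x = (S *ᵥ (w : G → ℂ)) (x * h) := h1
        _ = ((μ i0 : ℂ) • (w : G → ℂ)) (x * h) := by rw [hw]
        _ = (μ i0 : ℂ) * (w : G → ℂ) (x * h) := rfl
        _ = ((μ i0 : ℂ) • (fun x => (w : G → ℂ) (x * h))) x := rfl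
    -- the representation on E
    have hEr : ∀ (h : G) (w : ↥E),
        WithLp.toLp 2 (fun x => (w.1 : G → ℂ) (x * h)) ∈ E :=
      fun h w => hinvE h w.1 w.2
    let r : G → (↥E ≃ₗ[ℂ] ↥E) := fun h =>
      { toFun := fun w => ⟨_, hEr h w⟩
        map_add' := fun w u => rfl
        map_smul' := fun c w => rfl
        invFun := fun w => ⟨_, hEr h⁻¹ w⟩
        left_inv := fun w => Subtype.ext (PiLp.ext fun x => congrArg w.1 (inv_mul_cancel_right x h))
        right_inv := fun w => Subtype.ext (PiLp.ext fun x => congrArg w.1 (mul_inv_cancel_right x h)) }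
    let ρ' : G →* (↥E ≃ₗ[ℂ] ↥E) :=
      { toFun := r
        map_one' := by
          apply LinearEquiv.ext; intro w; apply Subtype.ext; apply PiLp.ext; intro x
          exact congrArg w.1 (mul_one x)
        map_mul' := by
          intro g h
          apply LinearEquiv.ext; intro w; apply Subtype.ext; apply PiLp.ext; intro x
          exact congrArg w.1 (mul_assoc x g h).symm }
    let ρ : G →* LinearMap.GeneralLinearGroup ℂ ↥E :=
      ((LinearMap.GeneralLinearGroup.generalLinearEquiv ℂ ↥E).symm.toMonoidHom).comp ρ'
    have hb0 : (b i0 : EuclideanSpace ℂ G) ∈ E := by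
      rw [memE, hSb' i0]
      rfl
    have hbne : (b i0 : EuclideanSpace ℂ G) ≠ 0 := b.orthonormal.ne_zero i0
    have hμ0ne : ((μ i0 : ℝ) : ℂ) ≠ 0 := Complex.ofReal_ne_zero.mpr (ne_of_gt hpos)
    have hρ : ρ ≠ 1 := by
      intro hcon
      have h1 : ∀ h : G, r h = 1 := by
        intro h
        have h2 : ρ h = 1 := by rw [hcon]; rfl
        have h3 : (LinearMap.GeneralLinearGroup.generalLinearEquiv ℂ ↥E) (ρ h) = r h :=
          (LinearMap.GeneralLinearGroup.generalLinearEquiv ℂ ↥E).apply_symm_apply (r h)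
        rw [h2, _root_.map_one] at h3
        exact h3.symm
      have hconst : ∀ x, (b i0 : G → ℂ) x = (b i0 : G → ℂ) 1 := by
        intro x
        have h4 := congrArg
          (fun e : ↥E ≃ₗ[ℂ] ↥E => ((e ⟨b i0, hb0⟩ : ↥E) : EuclideanSpace ℂ G) 1) (h1 x)
        have h5 : (b i0 : G → ℂ) (1 * x) = (b i0 : G → ℂ) 1 := h4
        rwa [one_mul] at h5
      have h5 : S *ᵥ (b i0 : G → ℂ) = (μ i0 : ℂ) • (b i0 : G → ℂ) := (memE _).mp hb0
      have h6 : ∀ x, (μ i0 : ℂ) * (b i0 : G → ℂ) x = 0 := by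
        intro x
        have h7 := congrFun h5 x
        have h8 : (S *ᵥ (b i0 : G → ℂ)) x = 0 := by
          show (∑ z, S x z * (b i0 : G → ℂ) z) = 0
          calc ∑ z, S x z * (b i0 : G → ℂ) z
              = ∑ z, S x z * (b i0 : G → ℂ) 1 := by
                exact Finset.sum_congr rfl fun z _ => by rw [hconst z]
            _ = (∑ z, S x z) * (b i0 : G → ℂ) 1 := (Finset.sum_mul _ _ _).symm
            _ = 0 := by rw [Srow, zero_mul]
        rw [h8] at h7
        exact h7.symm
      apply hbne
      ext x
      rcases mul_eq_zero.mp (h6 x) with hc | hc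
      · exact absurd hc hμ0ne
      · exact hc
    have hdim : d ≤ Module.finrank ℂ ↥E := hQR ↥E ρ hρ
    -- orthogonality of E to other eigenvectors
    have ortho : ∀ (w : EuclideanSpace ℂ G), w ∈ E → ∀ j, μ j ≠ μ i0 → b.repr w j = 0 := by
      intro w hw j hj
      have h1 : (μ j : ℂ) * b.repr w j = (μ i0 : ℂ) * b.repr w j := by
        have h2 := reprS w j
        rw [(memE w).mp hw, WithLp.toLp_smul, WithLp.toLp_ofLp, _root_.map_smul] at h2
        simpa using h2.symm
      have h2 : ((μ j : ℂ) - (μ i0 : ℂ)) * b.repr w j = 0 := by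
        rw [sub_mul, h1, sub_self]
      rcases mul_eq_zero.mp h2 with hc | hc
      · exact absurd (sub_eq_zero.mp hc) (fun hcc => hj (by exact_mod_cast hcc))
      · exact hc
    -- dimension of E bounded by multiplicity of top eigenvalue
    have hinj : Module.finrank ℂ ↥E ≤ Fintype.card {i // μ i = μ i0} := by
      let φ : ↥E →ₗ[ℂ] ({i // μ i = μ i0} → ℂ) :=
        { toFun := fun w i => b.repr w.1 i.1
          map_add' := by intro w u; funext i; simp
          map_smul' := by intro c w; funext i; simp }
      have hφ : Function.Injective φ := by
        intro w u hwu
        apply Subtype.ext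
        apply b.repr.injective
        apply PiLp.ext; intro j
        by_cases hj : μ j = μ i0
        · exact congrFun hwu ⟨j, hj⟩
        · rw [ortho w.1 w.2 j hj, ortho u.1 u.2 j hj]
      calc Module.finrank ℂ ↥E ≤ Module.finrank ℂ ({i // μ i = μ i0} → ℂ) :=
            LinearMap.finrank_le_finrank_of_injective hφ
        _ = Fintype.card {i // μ i = μ i0} := by
            rw [Module.finrank_pi]
    have hsum_top : (Fintype.card {i // μ i = μ i0} : ℝ) * μ i0 ≤ ∑ i, μ i := by
      rw [Fintype.card_subtype]
      calc ((Finset.univ.filter (fun i => μ i = μ i0)).card : ℝ) * μ i0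
          = ∑ _i ∈ Finset.univ.filter (fun i => μ i = μ i0), μ i0 := by
            rw [Finset.sum_const, nsmul_eq_mul]
        _ = ∑ i ∈ Finset.univ.filter (fun i => μ i = μ i0), μ i :=
            Finset.sum_congr rfl fun i hi => ((Finset.mem_filter.mp hi).2).symm
        _ ≤ ∑ i, μ i :=
            Finset.sum_le_sum_of_subset_of_nonneg (Finset.filter_subset _ _)
              fun i _ _ => hnn i
    have htop : (d : ℝ) * μ i0 ≤ (Fintype.card G : ℝ) * ∑ y, ‖f y‖ ^ 2 := by
      rw [← traceμ]
      calc (d : ℝ) * μ i0 ≤ (Fintype.card {i // μ i = μ i0} : ℝ) * μ i0 := by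
            apply mul_le_mul_of_nonneg_right _ (le_of_lt hpos)
            exact_mod_cast le_trans hdim hinj
        _ ≤ ∑ i, μ i := hsum_top
    have hKvle : ∑ x, ‖∑ z, f (x * z⁻¹) * v z‖ ^ 2 ≤ μ i0 * ∑ z, ‖v z‖ ^ 2 := by
      calc ∑ x, ‖∑ z, f (x * z⁻¹) * v z‖ ^ 2 = ∑ x, ‖(K *ᵥ v) x‖ ^ 2 := by simp_rw [hKv_eq]
        _ = ∑ i, μ i * ‖b.repr (WithLp.toLp 2 v) i‖ ^ 2 := master (WithLp.toLp 2 v)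
        _ ≤ ∑ i, μ i0 * ‖b.repr (WithLp.toLp 2 v) i‖ ^ 2 :=
            Finset.sum_le_sum fun i _ => mul_le_mul_of_nonneg_right (hi0 i) (by positivity)
        _ = μ i0 * ∑ i, ‖b.repr (WithLp.toLp 2 v) i‖ ^ 2 := (Finset.mul_sum _ _ _).symm
        _ = μ i0 * ∑ z, ‖v z‖ ^ 2 := by rw [← parseval (WithLp.toLp 2 v)]
    have hnnv : (0:ℝ) ≤ ∑ z, ‖v z‖ ^ 2 := by positivity
    calc (d : ℝ) * ∑ x, ‖∑ z, f (x * z⁻¹) * v z‖ ^ 2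
        ≤ (d : ℝ) * (μ i0 * ∑ z, ‖v z‖ ^ 2) := by
          apply mul_le_mul_of_nonneg_left hKvle (by positivity)
      _ = ((d : ℝ) * μ i0) * ∑ z, ‖v z‖ ^ 2 := by ring
      _ ≤ ((Fintype.card G : ℝ) * ∑ y, ‖f y‖ ^ 2) * ∑ z, ‖v z‖ ^ 2 :=
          mul_le_mul_of_nonneg_right htop hnnv

theorem stmt_2 (δ ε η : ℝ) (hδ : 0 < δ) (hε : 0 < ε) (hη : 0 < η) :
    ∃ d : ℕ, 0 < d ∧
      ∀ (G : Type) [Group G] [Fintype G] [DecidableEq G], IsQuasirandom G d →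
        ∀ A B : Finset G,
          δ * Fintype.card G ≤ A.card →
          δ * Fintype.card G ≤ B.card →
          (Nat.card {x : G //
              ((A ∩ x • B).card : ℝ) < (1 - η) * A.card * B.card / Fintype.card G} : ℝ) <
            ε * Fintype.card G := by
  classical
  refine ⟨⌈2 / (ε * η ^ 2 * δ ^ 2)⌉₊ + 1, Nat.succ_pos _, ?_⟩
  set d : ℕ := ⌈2 / (ε * η ^ 2 * δ ^ 2)⌉₊ + 1 with hd
  intro G _ _ _ hQR A B hA hB
  set N : ℝ := (Fintype.card G : ℝ) with hN
  have hN0 : 0 < N := by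
    rw [hN]
    exact_mod_cast Fintype.card_pos
  set a : ℝ := (A.card : ℝ) with ha
  set bb : ℝ := (B.card : ℝ) with hbb
  have ha0 : 0 < a := lt_of_lt_of_le (mul_pos hδ hN0) hA
  have hb0 : 0 < bb := lt_of_lt_of_le (mul_pos hδ hN0) hB
  have haN : a ≤ N := by
    rw [ha, hN]
    exact_mod_cast Finset.card_le_univ A
  -- the mean-zero function and the indicator vector
  set f : G → ℂ := fun y => (if y ∈ A then (1:ℂ) else 0) - ((a / N : ℝ) : ℂ) with hf_def
  set v : G → ℂ := fun z => if z⁻¹ ∈ B then (1:ℂ) else 0 with hv_def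
  have hf : ∑ y, f y = 0 := by
    rw [hf_def]
    rw [Finset.sum_sub_distrib]
    rw [Finset.sum_boole, Finset.sum_const]
    have h1 : (Finset.univ.filter (fun y => y ∈ A)) = A := by
      rw [Finset.filter_mem_eq_inter, Finset.univ_inter]
    rw [h1, nsmul_eq_mul, ha, hN]
    have hNne : ((Fintype.card G : ℝ)) ≠ 0 := by
      rw [← hN]; exact ne_of_gt hN0
    push_cast
    field_simp
    simp [Finset.card_univ]
  -- convolution value
  have conv : ∀ x : G, (∑ z, f (x * z⁻¹) * v z) =
      (((((A ∩ x • B).card : ℝ) - a * bb / N : ℝ)) : ℂ) := by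
    intro x
    have e1 : ∑ z, f (x * z⁻¹) * v z = ∑ w, (if w ∈ B then f (x * w) else 0) := by
      refine Fintype.sum_equiv (Equiv.inv G) _ _ fun z => ?_
      simp only [hv_def, Equiv.inv_apply, mul_ite, mul_one, mul_zero]
    have e2 : ∑ w, (if w ∈ B then f (x * w) else 0) = ∑ w ∈ B, f (x * w) := by
      rw [Finset.sum_ite_mem, Finset.univ_inter]
    have e3 : ∑ w ∈ B, f (x * w) =
        ((B.filter (fun w => x * w ∈ A)).card : ℂ) - (B.card : ℂ) * ((a / N : ℝ) : ℂ) := by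
      rw [hf_def]
      rw [Finset.sum_sub_distrib, Finset.sum_const, nsmul_eq_mul]
      congr 1
      rw [Finset.sum_boole]
    have e4 : (B.filter (fun w => x * w ∈ A)).card = (A ∩ x • B).card := by
      apply Finset.card_bij' (fun w _ => x * w) (fun u _ => x⁻¹ * u)
      · intro w hw
        rw [Finset.mem_filter] at hw
        rw [Finset.mem_inter]
        exact ⟨hw.2, Finset.smul_mem_smul_finset hw.1⟩
      · intro u hu
        rw [Finset.mem_inter] at hu
        rw [Finset.mem_filter]
        obtain ⟨y, hy, hxy⟩ := Finset.mem_smul_finset.mp hu.2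
        have : y = x⁻¹ * u := by rw [← hxy, smul_eq_mul, inv_mul_cancel_left]
        constructor
        · rw [← this]; exact hy
        · rw [mul_inv_cancel_left]; exact hu.1
      · intro w _; rw [inv_mul_cancel_left]
      · intro u _; rw [mul_inv_cancel_left]
    rw [e1, e2, e3, e4, ha, hbb, hN]
    push_cast
    ring
  -- norm of v
  have hvnorm : ∑ z, ‖v z‖ ^ 2 = bb := by
    have e1 : ∑ z, ‖v z‖ ^ 2 = ∑ w, (if w ∈ B then (1:ℝ) else 0) := by
      refine Fintype.sum_equiv (Equiv.inv G) _ _ fun z => ?_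
      by_cases hz : z⁻¹ ∈ B <;> simp [hv_def, hz]
    rw [e1, Finset.sum_boole, hbb]
    congr 1
    rw [Finset.filter_mem_eq_inter, Finset.univ_inter]
  -- norm of f
  have hfnorm : ∑ y, ‖f y‖ ^ 2 ≤ 2 * a := by
    have hterm : ∀ y, ‖f y‖ ^ 2 ≤ (if y ∈ A then (1:ℝ) else 0) + (a/N)^2 := by
      intro y
      have haN' : 0 ≤ a / N := le_of_lt (div_pos ha0 hN0)
      have haN'' : a / N ≤ 1 := by rw [div_le_one hN0]; exact haN
      by_cases hy : y ∈ A
      · have hfy : f y = (((1 - a/N : ℝ)) : ℂ) := by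
          simp [hf_def, hy, Complex.ofReal_sub]
        rw [hfy, Complex.norm_real, Real.norm_eq_abs, if_pos hy]
        have h2 : |1 - a/N| ≤ 1 := by rw [abs_le]; constructor <;> linarith
        nlinarith [abs_nonneg (1 - a/N), sq_nonneg (a/N)]
      · have hfy : f y = ((-(a/N) : ℝ) : ℂ) := by
          simp [hf_def, hy]
        rw [hfy, Complex.norm_real, Real.norm_eq_abs, if_neg hy, abs_neg, abs_of_nonneg haN']
        nlinarith
    calc ∑ y, ‖f y‖ ^ 2 ≤ ∑ y, ((if y ∈ A then (1:ℝ) else 0) + (a/N)^2) :=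
          Finset.sum_le_sum fun y _ => hterm y
      _ = a + N * (a/N)^2 := by
          rw [Finset.sum_add_distrib, Finset.sum_boole, Finset.sum_const, nsmul_eq_mul]
          congr 2
          rw [Finset.filter_mem_eq_inter, Finset.univ_inter]
      _ ≤ a + a := by
          have h3 : N * (a/N)^2 = a^2/N := by field_simp
          have h4 : a^2/N ≤ a := by rw [div_le_iff₀ hN0]; nlinarith
          linarith
      _ = 2 * a := by ring
  -- apply the key mixing lemma
  have hkey := key_mixing hQR f hf v
  have hd0 : (0:ℝ) < (d:ℝ) := by
    rw [hd]; push_cast; positivity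
  have hkey2 : (d:ℝ) * ∑ x, ‖∑ z, f (x * z⁻¹) * v z‖ ^ 2 ≤ N * (2*a) * bb := by
    calc (d:ℝ) * ∑ x, ‖∑ z, f (x * z⁻¹) * v z‖ ^ 2
        ≤ (N * ∑ y, ‖f y‖ ^ 2) * ∑ z, ‖v z‖ ^ 2 := hkey
      _ = (N * ∑ y, ‖f y‖ ^ 2) * bb := by rw [hvnorm]
      _ ≤ (N * (2*a)) * bb := by
          apply mul_le_mul_of_nonneg_right _ (le_of_lt hb0)
          exact mul_le_mul_of_nonneg_left hfnorm (le_of_lt hN0)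
  -- the bad set
  set P : G → Prop := fun x => ((A ∩ x • B).card : ℝ) < (1 - η) * a * bb / N with hP
  have hNatCard : (Nat.card {x : G // P x} : ℝ) = ((Finset.univ.filter P).card : ℝ) := by
    rw [Nat.card_eq_fintype_card, Fintype.card_subtype]
  set m : ℕ := (Finset.univ.filter P).card with hm
  have hperx : ∀ x : G, P x → (η*a*bb/N)^2 ≤ ‖∑ z, f (x * z⁻¹) * v z‖ ^ 2 := by
    intro x hx
    rw [conv x, Complex.norm_real, Real.norm_eq_abs]
    set c : ℝ := ((A ∩ x • B).card : ℝ) with hc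
    have hx' : c < (1 - η) * a * bb / N := hx
    have h5 : η * (a*bb/N) ≤ a*bb/N - c := by
      have : (1 - η) * a * bb / N = a*bb/N - η * (a*bb/N) := by ring
      linarith [hx'.le.trans_eq this]
    have h6 : (0:ℝ) ≤ η * (a*bb/N) := le_of_lt (mul_pos hη (div_pos (mul_pos ha0 hb0) hN0))
    have h7 : η * (a*bb/N) ≤ |c - a*bb/N| := by
      rw [abs_sub_comm]
      exact h5.trans (le_abs_self _)
    calc (η*a*bb/N)^2 = (η*(a*bb/N))^2 := by ring
      _ ≤ |c - a*bb/N|^2 := by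
          apply pow_le_pow_left₀ h6 h7
  have hbad : (m:ℝ) * (η*a*bb/N)^2 ≤ ∑ x, ‖∑ z, f (x * z⁻¹) * v z‖ ^ 2 := by
    calc (m:ℝ) * (η*a*bb/N)^2
        = ∑ _x ∈ Finset.univ.filter P, (η*a*bb/N)^2 := by
          rw [Finset.sum_const, nsmul_eq_mul]
      _ ≤ ∑ x ∈ Finset.univ.filter P, ‖∑ z, f (x * z⁻¹) * v z‖ ^ 2 :=
          Finset.sum_le_sum fun x hx => hperx x (Finset.mem_filter.mp hx).2
      _ ≤ ∑ x, ‖∑ z, f (x * z⁻¹) * v z‖ ^ 2 :=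
          Finset.sum_le_sum_of_subset_of_nonneg (Finset.filter_subset _ _)
            fun x _ _ => by positivity
  -- final arithmetic
  have hdC : 2 < (d:ℝ) * (ε*η^2*δ^2) := by
    have h1 : 2/(ε*η^2*δ^2) < (d:ℝ) := by
      have h2 : 2/(ε*η^2*δ^2) ≤ (⌈2 / (ε * η ^ 2 * δ ^ 2)⌉₊ : ℝ) := Nat.le_ceil _
      have h3 : (d:ℝ) = (⌈2 / (ε * η ^ 2 * δ ^ 2)⌉₊ : ℝ) + 1 := by rw [hd]; push_cast; ring
      linarith
    rw [div_lt_iff₀ (by positivity)] at h1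
    linarith
  clear_value m f v d N a bb
  have h8 : (d:ℝ) * ((m:ℝ) * (η*a*bb/N)^2) ≤ N*(2*a)*bb :=
    le_trans (mul_le_mul_of_nonneg_left hbad (le_of_lt hd0)) hkey2
  have h9 : (d:ℝ) * (m:ℝ) * (η*a*bb)^2 ≤ 2*N^3*(a*bb) := by
    have hN2 : (0:ℝ) < N^2 := pow_pos hN0 2
    have h9' := mul_le_mul_of_nonneg_right h8 (le_of_lt hN2)
    calc (d:ℝ)*(m:ℝ)*(η*a*bb)^2 = (d:ℝ) * ((m:ℝ) * (η*a*bb/N)^2) * N^2 := by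
          field_simp
      _ ≤ N*(2*a)*bb*N^2 := h9'
      _ = 2*N^3*(a*bb) := by ring
  have h10 : (d:ℝ)*(m:ℝ)*η^2*(a*bb) ≤ 2*N^3 := by
    have hab0 : (0:ℝ) < a*bb := mul_pos ha0 hb0
    apply le_of_mul_le_mul_right _ hab0
    calc (d:ℝ)*(m:ℝ)*η^2*(a*bb)*(a*bb) = (d:ℝ)*(m:ℝ)*(η*a*bb)^2 := by ring
      _ ≤ 2*N^3*(a*bb) := h9
  have h11 : (d:ℝ)*(m:ℝ)*η^2*(δ*N*(δ*N)) ≤ 2*N^3 := by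
    refine le_trans ?_ h10
    apply mul_le_mul_of_nonneg_left _ (mul_nonneg (mul_nonneg (le_of_lt hd0) (Nat.cast_nonneg m)) (sq_nonneg η))
    exact mul_le_mul hA hB (le_of_lt (mul_pos hδ hN0)) (le_of_lt ha0)
  have h12 : 2*N^3 < (d:ℝ)*(ε*η^2*δ^2)*N^3 :=
    mul_lt_mul_of_pos_right hdC (pow_pos hN0 3)
  have hQ : (0:ℝ) < (d:ℝ)*η^2*δ^2*N^2 :=
    mul_pos (mul_pos (mul_pos hd0 (pow_pos hη 2)) (pow_pos hδ 2)) (pow_pos hN0 2)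
  have h15 : ((d:ℝ)*η^2*δ^2*N^2) * (m:ℝ) < ((d:ℝ)*η^2*δ^2*N^2) * (ε*N) := by
    calc ((d:ℝ)*η^2*δ^2*N^2) * (m:ℝ) = (d:ℝ)*(m:ℝ)*η^2*(δ*N*(δ*N)) := by ring
      _ ≤ 2*N^3 := h11
      _ < (d:ℝ)*(ε*η^2*δ^2)*N^3 := h12
      _ = ((d:ℝ)*η^2*δ^2*N^2) * (ε*N) := by ring
  have h16 : (m:ℝ) < ε * N := lt_of_mul_lt_mul_left h15 (le_of_lt hQ)
  rw [hNatCard]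
  exact h16
end

section
/- For all positive real numbers δ and ε and every positive integer k there exists η = η(δ, ε, k) > 0 with the following property: for every finite group G, every subset A of G with |A| ≥ δ·|G|, and any three functions f₁, f₂, f₃ from A to G, each having all fibers of size at most k, such that |{a ∈ A : f₁(a)·f₂(a) = f₃(a)}| ≥ ε·|G|, the number of triples (a₁, a₂, a₃) ∈ A × A × A with f₁(a₁)·f₂(a₂) = f₃(a₃) is at least η·|G|². -/
open Finset SimpleGraph
namespace Stmt7
variable {G : Type} [Group G] [Fintype G] [DecidableEq G]
def triRel (X Y Z : Finset G) (p q : Fin 3 × G) : Prop :=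
  (p.1 = 0 ∧ q.1 = 1 ∧ p.2⁻¹ * q.2 ∈ X) ∨
  (p.1 = 1 ∧ q.1 = 2 ∧ p.2⁻¹ * q.2 ∈ Y) ∨
  (p.1 = 0 ∧ q.1 = 2 ∧ p.2⁻¹ * q.2 ∈ Z)
def triGraph (X Y Z : Finset G) : SimpleGraph (Fin 3 × G) where
  Adj p q := triRel X Y Z p q ∨ triRel X Y Z q p
  symm := ⟨fun p q h => Or.symm h⟩
  loopless := ⟨fun p h => by
    rcases h with (⟨h1, h2, -⟩ | ⟨h1, h2, -⟩ | ⟨h1, h2, -⟩) |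
      (⟨h1, h2, -⟩ | ⟨h1, h2, -⟩ | ⟨h1, h2, -⟩) <;>
      (rw [h1] at h2; exact absurd h2 (by decide))⟩
set_option maxHeartbeats 1000000 in
lemma clique_struct {X Y Z : Finset G} {t : Finset (Fin 3 × G)}
    (ht : (triGraph X Y Z).IsNClique 3 t) :
    ∃ u x y, x ∈ X ∧ y ∈ Y ∧ x * y ∈ Z ∧
      t = {((0 : Fin 3), u), (1, u * x), (2, u * x * y)} := by
  rw [is3Clique_iff] at ht
  obtain ⟨⟨ai, au⟩, ⟨bi, bu⟩, ⟨ci, cu⟩, hab, hac, hbc, rfl⟩ := ht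
  fin_cases ai <;> fin_cases bi <;> fin_cases ci <;>
    simp only [triGraph, triRel, Fin.ext_iff, Fin.isValue] at hab hac hbc <;>
    (try norm_num at hab) <;> (try norm_num at hac) <;> (try norm_num at hbc)
  · exact ⟨au, au⁻¹ * bu, bu⁻¹ * cu, hab, hbc, by simpa [mul_assoc] using hac,
      by ext p; simp [mul_assoc]; try tauto⟩
  · exact ⟨au, au⁻¹ * cu, cu⁻¹ * bu, hac, hbc, by simpa [mul_assoc] using hab,
      by ext p; simp [mul_assoc]; try tauto⟩
  · exact ⟨bu, bu⁻¹ * au, au⁻¹ * cu, hab, hac, by simpa [mul_assoc] using hbc,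
      by ext p; simp [mul_assoc]; try tauto⟩
  · exact ⟨cu, cu⁻¹ * au, au⁻¹ * bu, hac, hab, by simpa [mul_assoc] using hbc,
      by ext p; simp [mul_assoc]; try tauto⟩
  · exact ⟨bu, bu⁻¹ * cu, cu⁻¹ * au, hbc, hac, by simpa [mul_assoc] using hab,
      by ext p; simp [mul_assoc]; try tauto⟩
  · exact ⟨cu, cu⁻¹ * bu, bu⁻¹ * au, hbc, hab, by simpa [mul_assoc] using hac,
      by ext p; simp [mul_assoc]; try tauto⟩

lemma clique_of (X Y Z : Finset G) {x y : G} (u : G) (hx : x ∈ X) (hy : y ∈ Y)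
    (hz : x * y ∈ Z) :
    (triGraph X Y Z).IsNClique 3 {((0 : Fin 3), u), (1, u * x), (2, u * x * y)} := by
  rw [is3Clique_triple_iff]
  refine ⟨Or.inl (Or.inl ⟨rfl, rfl, by simpa⟩),
    Or.inl (Or.inr (Or.inr ⟨rfl, rfl, by simpa [mul_assoc]⟩)),
    Or.inl (Or.inr (Or.inl ⟨rfl, rfl, by simpa [mul_assoc]⟩))⟩
def tri (f₁ f₃ : G → G) (u a : G) : Finset (Fin 3 × G) :=
  {((0 : Fin 3), u), (1, u * f₁ a), (2, u * f₃ a)}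

def cc (f₁ f₃ : G → G) (i : Fin 3) (a : G) : G := ![1, f₁ a, f₃ a] i

lemma mem_tri {f₁ f₃ : G → G} {v : Fin 3 × G} {u a : G} :
    v ∈ tri f₁ f₃ u a ↔ v.2 = u * cc f₁ f₃ v.1 a := by
  obtain ⟨i, g⟩ := v
  fin_cases i <;> simp [tri, cc, Prod.ext_iff, Fin.ext_iff] <;> norm_num <;> tauto

set_option linter.unusedSectionVars false in
lemma fiber_le {A B : Finset G} {f₁ f₂ f₃ : G → G} {k : ℕ}
    (hBA : B ⊆ A) (hBeq : ∀ a ∈ B, f₁ a * f₂ a = f₃ a)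
    (h1 : ∀ g, #(A.filter fun a => f₁ a = g) ≤ k)
    (h2 : ∀ g, #(A.filter fun a => f₂ a = g) ≤ k)
    (h3 : ∀ g, #(A.filter fun a => f₃ a = g) ≤ k)
    {i j : Fin 3} (hij : i ≠ j) (g : G) :
    #(B.filter fun a => (cc f₁ f₃ i a)⁻¹ * cc f₁ f₃ j a = g) ≤ k := by
  fin_cases i <;> fin_cases j
  · exact absurd rfl hij
  · refine le_trans (card_le_card ?_) (h1 g)
    intro a ha; rw [mem_filter] at ha ⊢
    refine ⟨hBA ha.1, ?_⟩; have h := ha.2; simp [cc] at h; exact h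
  · refine le_trans (card_le_card ?_) (h3 g)
    intro a ha; rw [mem_filter] at ha ⊢
    refine ⟨hBA ha.1, ?_⟩; have h := ha.2; simp [cc] at h; exact h
  · refine le_trans (card_le_card ?_) (h1 g⁻¹)
    intro a ha; rw [mem_filter] at ha ⊢
    refine ⟨hBA ha.1, ?_⟩; have h := ha.2; simp [cc] at h
    rw [← h]; group
  · exact absurd rfl hij
  · refine le_trans (card_le_card ?_) (h2 g)
    intro a ha; rw [mem_filter] at ha ⊢
    refine ⟨hBA ha.1, ?_⟩; have h := ha.2; simp [cc] at h
    rw [← hBeq a ha.1, inv_mul_cancel_left] at h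
    exact h
  · refine le_trans (card_le_card ?_) (h3 g⁻¹)
    intro a ha; rw [mem_filter] at ha ⊢
    refine ⟨hBA ha.1, ?_⟩; have h := ha.2; simp [cc] at h
    rw [← h]; group
  · refine le_trans (card_le_card ?_) (h2 g⁻¹)
    intro a ha; rw [mem_filter] at ha ⊢
    refine ⟨hBA ha.1, ?_⟩; have h := ha.2; simp [cc] at h
    rw [← h, ← hBeq a ha.1]; group
  · exact absurd rfl hij
end Stmt7

set_option maxHeartbeats 1000000 in


theorem stmt_7 (δ ε : ℝ) (hδ : 0 < δ) (hε : 0 < ε) (k : ℕ) (hk : 0 < k) :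
    ∃ η : ℝ, 0 < η ∧
      ∀ (G : Type) [Group G] [Fintype G] [DecidableEq G] (A : Finset G),
        δ * Fintype.card G ≤ A.card →
        ∀ f₁ f₂ f₃ : G → G,
          (∀ g : G, (A.filter (fun a => f₁ a = g)).card ≤ k) →
          (∀ g : G, (A.filter (fun a => f₂ a = g)).card ≤ k) →
          (∀ g : G, (A.filter (fun a => f₃ a = g)).card ≤ k) →
          ε * Fintype.card G ≤ ((A.filter (fun a => f₁ a * f₂ a = f₃ a)).card : ℝ) →
          η * (Fintype.card G : ℝ) ^ 2 ≤
            (Nat.card {p : G × G × G //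
              p.1 ∈ A ∧ p.2.1 ∈ A ∧ p.2.2 ∈ A ∧ f₁ p.1 * f₂ p.2.1 = f₃ p.2.2} : ℝ) := by
  classical
  have hkR : (0:ℝ) < k := Nat.cast_pos.2 hk
  have hε₀ : (0:ℝ) < min ε 1 := lt_min hε one_pos
  set ε' : ℝ := min ε 1 / (9 * k) with hε'def
  have hε' : 0 < ε' := div_pos hε₀ (by positivity)
  have hε'1 : ε' ≤ 1 := by
    rw [hε'def, div_le_one (by positivity)]
    have h9 : (1:ℝ) ≤ 9 * k := by nlinarith [(Nat.one_le_cast (α := ℝ)).2 hk]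
    exact le_trans (min_le_right _ _) h9
  have htrb := SimpleGraph.triangleRemovalBound_pos hε'
  refine ⟨27 * SimpleGraph.triangleRemovalBound ε', by positivity, ?_⟩
  intro G _ _ _ A hA f₁ f₂ f₃ h1 h2 h3 hsol
  set N : ℕ := Fintype.card G with hN
  have hN1 : 1 ≤ N := Fintype.card_pos
  have hn0 : (0:ℝ) ≤ (N:ℝ) := Nat.cast_nonneg _
  have hn1 : (1:ℝ) ≤ (N:ℝ) := Nat.one_le_cast.2 hN1
  set B : Finset G := A.filter (fun a => f₁ a * f₂ a = f₃ a) with hBdef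
  have hBA : B ⊆ A := Finset.filter_subset _ _
  have hBeq : ∀ a ∈ B, f₁ a * f₂ a = f₃ a := fun a ha => (Finset.mem_filter.1 ha).2
  set X := A.image f₁ with hX
  set Y := A.image f₂ with hY
  set Z := A.image f₃ with hZ
  letI : DecidableRel (Stmt7.triGraph X Y Z).Adj := Classical.decRel _
  have htri : ∀ (u : G), ∀ a ∈ B,
      (Stmt7.triGraph X Y Z).IsNClique 3 (Stmt7.tri f₁ f₃ u a) := by
    intro u a ha
    have h := Stmt7.clique_of X Y Z u (Finset.mem_image_of_mem f₁ (hBA ha))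
      (Finset.mem_image_of_mem f₂ (hBA ha))
      (by rw [hBeq a ha]; exact Finset.mem_image_of_mem f₃ (hBA ha))
    rw [show u * f₁ a * f₂ a = u * f₃ a by rw [mul_assoc, hBeq a ha]] at h
    unfold Stmt7.tri
    exact h
  -- Step 1 : far from triangle-free
  have far : (Stmt7.triGraph X Y Z).FarFromTriangleFree ε' := by
    intro s hs hfree
    have count : #((Finset.univ : Finset G) ×ˢ B) * 1 ≤ #s * k := by
      refine Finset.card_mul_le_card_mul
        (fun ua e => e ∈ (Stmt7.tri f₁ f₃ ua.1 ua.2).sym2) ?_ ?_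
      · rintro ⟨u, a⟩ hua
        rw [Finset.mem_product] at hua
        have ha := hua.2
        have hcl := htri u a ha
        have hnc : ¬ ((Stmt7.triGraph X Y Z).deleteEdges ↑s).IsNClique 3
            (Stmt7.tri f₁ f₃ u a) := hfree _
        rw [SimpleGraph.isNClique_iff] at hnc
        push_neg at hnc
        have hICn : ¬ ((Stmt7.triGraph X Y Z).deleteEdges ↑s).IsClique
            (Stmt7.tri f₁ f₃ u a) := fun hIC => hnc hIC hcl.2
        rw [SimpleGraph.isClique_iff, Set.Pairwise] at hICn
        push_neg at hICn
        obtain ⟨p, hp, q, hq, hpq, hnadj⟩ := hICn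
        have hadj : (Stmt7.triGraph X Y Z).Adj p q := hcl.1 hp hq hpq
        have hmem : s(p, q) ∈ s := by
          by_contra hns
          exact hnadj ((SimpleGraph.deleteEdges_adj).2 ⟨hadj, by simpa using hns⟩)
        refine Finset.Nonempty.card_pos ⟨s(p, q), ?_⟩
        rw [Finset.mem_bipartiteAbove]
        exact ⟨hmem, Finset.mk_mem_sym2_iff.2 ⟨by exact_mod_cast hp, by exact_mod_cast hq⟩⟩
      · intro e he
        have hediag := SimpleGraph.not_isDiag_of_mem_edgeSet _
          (SimpleGraph.mem_edgeFinset.1 (hs he))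
        revert hediag
        induction e using Sym2.ind with
        | _ p q =>
        intro hediag
        rw [Sym2.mk_isDiag_iff] at hediag
        by_cases hij : p.1 = q.1
        · have : ((Finset.univ : Finset G) ×ˢ B).bipartiteBelow
              (fun ua e => e ∈ (Stmt7.tri f₁ f₃ ua.1 ua.2).sym2) s(p, q) = ∅ := by
            rw [Finset.eq_empty_iff_forall_notMem]
            rintro ⟨u, a⟩ hua
            rw [Finset.mem_bipartiteBelow, Finset.mk_mem_sym2_iff] at hua
            obtain ⟨-, hp, hq⟩ := hua
            rw [Stmt7.mem_tri] at hp hq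
            exact hediag (Prod.ext hij (by rw [hp, hq, hij]))
          rw [this]
          simp
        · refine le_trans (Finset.card_le_card_of_injOn (fun ua => ua.2) ?_ ?_)
            (Stmt7.fiber_le hBA hBeq h1 h2 h3 hij (p.2⁻¹ * q.2))
          · rintro ⟨u, a⟩ hua
            rw [Finset.mem_coe, Finset.mem_bipartiteBelow, Finset.mk_mem_sym2_iff] at hua
            obtain ⟨huaP, hp, hq⟩ := hua
            rw [Finset.mem_product] at huaP
            rw [Stmt7.mem_tri] at hp hq
            rw [Finset.mem_coe, Finset.mem_filter]
            refine ⟨huaP.2, ?_⟩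
            rw [hp, hq]
            group
          · rintro ⟨u, a⟩ hua ⟨u', a'⟩ hua' heq
            simp only at heq
            subst heq
            rw [Finset.mem_coe, Finset.mem_bipartiteBelow, Finset.mk_mem_sym2_iff] at hua hua'
            obtain ⟨-, hp, -⟩ := hua
            obtain ⟨-, hp', -⟩ := hua'
            rw [Stmt7.mem_tri] at hp hp'
            have : u = u' := mul_right_cancel (hp.symm.trans hp')
            rw [this]
    rw [Finset.card_product, Finset.card_univ, mul_one] at count
    have hcard3 : Fintype.card (Fin 3 × G) = 3 * N := by simp [hN]
    rw [hcard3]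
    have hBcast : (min ε 1) * N ≤ (#B : ℝ) := by
      refine le_trans ?_ hsol
      have := min_le_left ε 1
      nlinarith
    have hcount : (N : ℝ) * (#B : ℝ) ≤ (#s : ℝ) * k := by exact_mod_cast count
    rw [hε'def, div_mul_eq_mul_div, div_le_iff₀ (by positivity)]
    push_cast
    nlinarith [mul_le_mul_of_nonneg_left hBcast hn0]
  have key := far.le_card_cliqueFinset
  -- Step 2 : upper bound for the number of triangles
  set SXY := ((X ×ˢ Y).filter fun xy : G × G => xy.1 * xy.2 ∈ Z) with hSXY
  have hsub : (Stmt7.triGraph X Y Z).cliqueFinset 3 ⊆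
      ((Finset.univ : Finset G) ×ˢ SXY).image
        (fun w : G × G × G =>
          ({((0 : Fin 3), w.1), (1, w.1 * w.2.1), (2, w.1 * w.2.1 * w.2.2)} :
            Finset (Fin 3 × G))) := by
    intro t ht
    rw [SimpleGraph.mem_cliqueFinset_iff] at ht
    obtain ⟨u, x, y, hx, hy, hz, rfl⟩ := Stmt7.clique_struct ht
    exact Finset.mem_image.2 ⟨(u, x, y),
      Finset.mem_product.2 ⟨Finset.mem_univ _,
        Finset.mem_filter.2 ⟨Finset.mem_product.2 ⟨hx, hy⟩, hz⟩⟩, rfl⟩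
  have hclq : #((Stmt7.triGraph X Y Z).cliqueFinset 3) ≤ N * #SXY := by
    refine le_trans (Finset.card_le_card hsub) (le_trans Finset.card_image_le ?_)
    rw [Finset.card_product, Finset.card_univ]
  set T := (Finset.univ : Finset (G × G × G)).filter
    (fun p => p.1 ∈ A ∧ p.2.1 ∈ A ∧ p.2.2 ∈ A ∧ f₁ p.1 * f₂ p.2.1 = f₃ p.2.2) with hT
  have hST : #SXY ≤ #T := by
    have hex : ∀ xy ∈ SXY, ∃ p, p ∈ T ∧ f₁ p.1 = xy.1 ∧ f₂ p.2.1 = xy.2 := by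
      rintro ⟨x, y⟩ hxy
      rw [hSXY, Finset.mem_filter, Finset.mem_product] at hxy
      obtain ⟨⟨hx, hy⟩, hz⟩ := hxy
      obtain ⟨a₁, ha₁, hfa₁⟩ := Finset.mem_image.1 hx
      obtain ⟨a₂, ha₂, hfa₂⟩ := Finset.mem_image.1 hy
      obtain ⟨a₃, ha₃, hfa₃⟩ := Finset.mem_image.1 hz
      exact ⟨(a₁, a₂, a₃), Finset.mem_filter.2 ⟨Finset.mem_univ _, ha₁, ha₂, ha₃,
        by rw [hfa₁, hfa₂, hfa₃]⟩, hfa₁, hfa₂⟩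
    choose! F hFT hF1 hF2 using hex
    refine Finset.card_le_card_of_injOn F (fun xy hxy => hFT xy hxy) ?_
    intro xy hxy xy' hxy' heq
    have e1 := hF1 xy hxy
    have e2 := hF2 xy hxy
    have e1' := hF1 xy' hxy'
    have e2' := hF2 xy' hxy'
    rw [heq] at e1 e2
    exact Prod.ext (e1.symm.trans e1') (e2.symm.trans e2')
  -- Step 3 : conclude
  have hNcard : (Nat.card {p : G × G × G //
      p.1 ∈ A ∧ p.2.1 ∈ A ∧ p.2.2 ∈ A ∧ f₁ p.1 * f₂ p.2.1 = f₃ p.2.2} : ℝ) = (#T : ℝ) := by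
    rw [Nat.card_eq_fintype_card, Fintype.card_subtype]
  rw [hNcard]
  have hclqR : (#((Stmt7.triGraph X Y Z).cliqueFinset 3) : ℝ) ≤ (N : ℝ) * (#T : ℝ) := by
    have : #((Stmt7.triGraph X Y Z).cliqueFinset 3) ≤ N * #T :=
      le_trans hclq (Nat.mul_le_mul_left _ hST)
    exact_mod_cast this
  have hcard3 : Fintype.card (Fin 3 × G) = 3 * N := by simp [hN]
  rw [hcard3] at key
  push_cast at key
  have hmain : 27 * SimpleGraph.triangleRemovalBound ε' * (N : ℝ) ^ 2 * (N : ℝ) ≤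
      (#T : ℝ) * (N : ℝ) := by nlinarith [le_trans key hclqR]
  have := le_of_mul_le_mul_right hmain (by linarith : (0:ℝ) < (N:ℝ))
  exact this
end

section
/- For every positive integer k there exists ν = ν(k) > 0 with the following property: for every finite group G and every partition of G into k subsets (colors) A₁, ..., A_k, there exists an index j with 1 ≤ j ≤ k such that the number of triples (a, b, c) ∈ A_j × A_j × A_j with a·b = c is at least ν·|G|². -/
open Finset

lemma ramseySeq (k : ℕ) (hk : 0 < k) (χ : ℕ → ℕ → Fin k) :
    ∀ (m : ℕ) (S : Finset ℕ), (k+1)^m ≤ S.card →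
    ∃ (v : ℕ → ℕ) (col : ℕ → Fin k),
      (∀ i, i < m → v i ∈ S) ∧
      (∀ i j, i < j → j < m → v i < v j) ∧
      (∀ i j, i < j → j < m → χ (v i) (v j) = col i) := by
  intro m
  induction m with
  | zero =>
    intro S _
    exact ⟨id, fun _ => ⟨0, hk⟩, by omega, by omega, by omega⟩
  | succ m ih =>
    intro S hS
    have hpow : 1 ≤ (k+1)^m := Nat.one_le_pow _ _ (by omega)
    haveI : Nonempty (Fin k) := ⟨⟨0,hk⟩⟩
    have hne : S.Nonempty := by
      rw [← Finset.card_pos]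
      have : 1 ≤ (k+1)^(m+1) := Nat.one_le_pow _ _ (by omega)
      omega
    set v0 := S.min' hne with hv0
    have hv0S : v0 ∈ S := S.min'_mem hne
    set S' := S.erase v0 with hS'
    have hcS' : S'.card = S.card - 1 := Finset.card_erase_of_mem hv0S
    have hSmul : (Finset.univ : Finset (Fin k)).card * (k+1)^m ≤ S'.card := by
      rw [Finset.card_univ, Fintype.card_fin]
      have : (k+1)^(m+1) = k * (k+1)^m + (k+1)^m := by ring
      omega
    obtain ⟨t, -, hT⟩ := Finset.exists_le_card_fiber_of_mul_le_card_of_maps_to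
      (f := fun s => χ v0 s) (fun a _ => Finset.mem_univ _) Finset.univ_nonempty hSmul
    obtain ⟨v', col', hmem, hmono, hcol⟩ := ih _ hT
    refine ⟨fun n => if n = 0 then v0 else v' (n-1),
            fun n => if n = 0 then t else col' (n-1), ?_, ?_, ?_⟩
    · intro i hi
      by_cases h : i = 0
      · simpa [h] using hv0S
      · have := hmem (i-1) (by omega)
        simp only [Finset.mem_filter, hS', Finset.mem_erase] at this
        simp [h, this.1.2]
    · intro i j hij hj
      have hjne : j ≠ 0 := by omega
      have hjT := hmem (j-1) (by omega)
      simp only [Finset.mem_filter, hS', Finset.mem_erase] at hjT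
      by_cases h : i = 0
      · beta_reduce; rw [if_pos h, if_neg hjne]
        have hle := S.min'_le _ hjT.1.2
        have := hjT.1.1
        omega
      · beta_reduce; rw [if_neg h, if_neg hjne]
        exact hmono (i-1) (j-1) (by omega) (by omega)
    · intro i j hij hj
      have hjne : j ≠ 0 := by omega
      have hjT := hmem (j-1) (by omega)
      simp only [Finset.mem_filter] at hjT
      by_cases h : i = 0
      · beta_reduce; rw [if_pos h, if_neg hjne, if_pos h]
        exact hjT.2
      · beta_reduce; rw [if_neg h, if_neg hjne, if_neg h]
        exact hcol (i-1) (j-1) (by omega) (by omega)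

lemma ramseyTri (k : ℕ) (hk : 0 < k) (χ : ℕ → ℕ → Fin k) :
    ∃ a b d : ℕ, a < b ∧ b < d ∧ d < (k+1)^(k+2) ∧ χ a b = χ b d ∧ χ a d = χ a b := by
  obtain ⟨v, col, hmem, hmono, hcol⟩ := ramseySeq k hk χ (k+2)
    (Finset.range ((k+1)^(k+2))) (by rw [Finset.card_range])
  have key : ∀ i j : ℕ, i < j → j ≤ k → col i = col j →
      ∃ a b d : ℕ, a < b ∧ b < d ∧ d < (k+1)^(k+2) ∧ χ a b = χ b d ∧ χ a d = χ a b := by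
    intro i j hij hjk hcc
    refine ⟨v i, v j, v (k+1), hmono i j hij (by omega), hmono j (k+1) (by omega) (by omega),
      ?_, ?_, ?_⟩
    · have := hmem (k+1) (by omega)
      simpa using this
    · rw [hcol i j hij (by omega), hcol j (k+1) (by omega) (by omega), hcc]
    · rw [hcol i (k+1) (by omega) (by omega), hcol i j hij (by omega)]
  obtain ⟨a, b, hne, hab⟩ := Fintype.exists_ne_map_eq_of_card_lt
    (fun i : Fin (k+1) => col i) (by simp)
  rcases hne.lt_or_gt with h | h
  · exact key a b h (by omega) hab
  · exact key b a h (by omega) hab.symm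

theorem stmt_8 (k : ℕ) (hk : 0 < k) :
    ∃ ν : ℝ, 0 < ν ∧
      ∀ (G : Type) [Group G] [Fintype G] (c : G → Fin k),
        ∃ j : Fin k,
          ν * (Fintype.card G : ℝ) ^ 2 ≤
            (Nat.card {p : G × G × G //
              c p.1 = j ∧ c p.2.1 = j ∧ c p.2.2 = j ∧ p.1 * p.2.1 = p.2.2} : ℝ) := by
  classical
  set N : ℕ := (k+1)^(k+2) with hNdef
  have hNpos : 0 < N := Nat.pow_pos (by omega)
  have hkR : (0:ℝ) < (k:ℝ) := by exact_mod_cast hk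
  have hNR : (0:ℝ) < (N:ℝ) := by exact_mod_cast hNpos
  have hposR : (0:ℝ) < (k:ℝ) * (N:ℝ)^3 := mul_pos hkR (pow_pos hNR 3)
  refine ⟨1 / ((k:ℝ) * (N:ℝ)^3), div_pos one_pos hposR, ?_⟩
  intro G _ _ c
  set n := Fintype.card G with hn
  have hnpos : 0 < n := Fintype.card_pos
  set D : Finset (G × G × G) :=
    Finset.univ.filter (fun p => (c p.1 = c p.2.1 ∧ c p.2.1 = c p.2.2) ∧ p.1 * p.2.1 = p.2.2)
    with hD
  -- every tuple contains a monochromatic Schur triple pattern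
  have hRx : ∀ x : Fin N → G, ∃ q : (Fin N × Fin N × Fin N) × (G × G × G),
      (q.1.1 < q.1.2.1 ∧ q.1.2.1 < q.1.2.2 ∧ q.2 ∈ D) ∧
      (x q.1.2.1 = x q.1.1 * q.2.1 ∧ x q.1.2.2 = x q.1.2.1 * q.2.2.1) := by
    intro x
    set x' : ℕ → G := fun a => if h : a < N then x ⟨a, h⟩ else 1 with hx'
    obtain ⟨a, b, d, hab, hbd, hdN, h1, h2⟩ :=
      ramseyTri k hk (fun a b => c ((x' a)⁻¹ * x' b))
    have haN : a < N := by omega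
    have hbN : b < N := by omega
    have hxa : x' a = x ⟨a, haN⟩ := dif_pos haN
    have hxb : x' b = x ⟨b, hbN⟩ := dif_pos hbN
    have hxd : x' d = x ⟨d, hdN⟩ := dif_pos hdN
    refine ⟨⟨(⟨a, haN⟩, ⟨b, hbN⟩, ⟨d, hdN⟩),
      ((x ⟨a, haN⟩)⁻¹ * x ⟨b, hbN⟩, (x ⟨b, hbN⟩)⁻¹ * x ⟨d, hdN⟩,
        (x ⟨a, haN⟩)⁻¹ * x ⟨d, hdN⟩)⟩,
      ⟨Fin.mk_lt_mk.mpr hab, Fin.mk_lt_mk.mpr hbd, ?_⟩, ?_, ?_⟩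
    · simp only [hD, Finset.mem_filter, Finset.mem_univ, true_and]
      refine ⟨⟨?_, ?_⟩, by group⟩
      · rw [← hxa, ← hxb, ← hxd]; exact h1
      · rw [← hxa, ← hxb, ← hxd]
        calc c ((x' b)⁻¹ * x' d) = (fun a b => c ((x' a)⁻¹ * x' b)) b d := rfl
          _ = c ((x' a)⁻¹ * x' b) := h1.symm
          _ = c ((x' a)⁻¹ * x' d) := by rw [← h2]
        -- want c(b d) = c(a d); h1 : χ a b = χ b d, h2 : χ a d = χ a b
    · exact (mul_inv_cancel_left _ _).symm
    · simp only []
      group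
  set Qset : Finset ((Fin N × Fin N × Fin N) × (G × G × G)) :=
    Finset.univ.filter (fun q => q.1.1 < q.1.2.1 ∧ q.1.2.1 < q.1.2.2 ∧ q.2 ∈ D) with hQ
  set fiber : ((Fin N × Fin N × Fin N) × (G × G × G)) → Finset (Fin N → G) :=
    fun q => Finset.univ.filter
      (fun x => x q.1.2.1 = x q.1.1 * q.2.1 ∧ x q.1.2.2 = x q.1.2.1 * q.2.2.1) with hfib
  have hcover : (Finset.univ : Finset (Fin N → G)) ⊆ Qset.biUnion fiber := by
    intro x _
    rw [Finset.mem_biUnion]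
    obtain ⟨q, hq1, hq2⟩ := hRx x
    exact ⟨q, by simp [hQ, hq1.1, hq1.2.1, hq1.2.2], by simp [hfib, hq2.1, hq2.2]⟩
  have hfibcard : ∀ q ∈ Qset, (fiber q).card * n^2 ≤ n^N := by
    intro q hq
    simp only [hQ, Finset.mem_filter, Finset.mem_univ, true_and] at hq
    have hij : q.1.1 ≠ q.1.2.1 := ne_of_lt hq.1
    have hjl : q.1.2.1 ≠ q.1.2.2 := ne_of_lt hq.2.1
    have hil : q.1.1 ≠ q.1.2.2 := ne_of_lt (lt_trans hq.1 hq.2.1)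
    have hinj : Set.InjOn
        (fun z : (Fin N → G) × (G × G) =>
          Function.update (Function.update z.1 q.1.2.1 z.2.1) q.1.2.2 z.2.2)
        (((fiber q) ×ˢ (Finset.univ : Finset (G × G)) : Finset _) : Set ((Fin N → G) × (G × G))) := by
      rintro ⟨x₁, g₁, h₁⟩ hz₁ ⟨x₂, g₂, h₂⟩ hz₂ heq
      simp only [Finset.mem_coe, Finset.mem_product, hfib,
        Finset.mem_filter, Finset.mem_univ, true_and, and_true] at hz₁ hz₂
      simp only [] at heq
      have hyi : ∀ m : Fin N, m ≠ q.1.2.1 → m ≠ q.1.2.2 →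
          x₁ m = x₂ m := by
        intro m hm1 hm2
        have := congrFun heq m
        rwa [Function.update_of_ne hm2, Function.update_of_ne hm2,
          Function.update_of_ne hm1, Function.update_of_ne hm1] at this
      have hxi : x₁ q.1.1 = x₂ q.1.1 := hyi _ (hij) (hil)
      have hg : g₁ = g₂ := by
        have := congrFun heq q.1.2.1
        rwa [Function.update_of_ne hjl, Function.update_of_ne hjl,
          Function.update_self, Function.update_self] at this
      have hh : h₁ = h₂ := by
        have := congrFun heq q.1.2.2
        rwa [Function.update_self, Function.update_self] at this
      have hx : x₁ = x₂ := by
        funext m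
        by_cases hm1 : m = q.1.2.1
        · subst hm1; rw [hz₁.1, hz₂.1, hxi]
        · by_cases hm2 : m = q.1.2.2
          · subst hm2; rw [hz₁.2, hz₂.2, hz₁.1, hz₂.1, hxi]
          · exact hyi m hm1 hm2
      rw [hx, hg, hh]
    have hle := Finset.card_le_card_of_injOn _
      (fun z _ => Finset.mem_univ _) hinj
    rw [Finset.card_product] at hle
    calc (fiber q).card * n^2
        = (fiber q).card * (Finset.univ : Finset (G × G)).card := by
          rw [Finset.card_univ, Fintype.card_prod, hn, sq]
      _ ≤ (Finset.univ : Finset (Fin N → G)).card := hle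
      _ = n ^ N := by rw [Finset.card_univ, Fintype.card_fun, Fintype.card_fin, hn]
  have hQcard : Qset.card ≤ N^3 * D.card := by
    have hsub : Qset ⊆ (Finset.univ : Finset (Fin N × Fin N × Fin N)) ×ˢ D := by
      intro q hq
      simp only [hQ, Finset.mem_filter, Finset.mem_univ, true_and] at hq
      rw [Finset.mem_product]
      exact ⟨Finset.mem_univ _, hq.2.2⟩
    calc Qset.card ≤ _ := Finset.card_le_card hsub
      _ = N^3 * D.card := by
        rw [Finset.card_product, Finset.card_univ, Fintype.card_prod,
          Fintype.card_prod, Fintype.card_fin]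
        ring
  have hmain : n^2 ≤ N^3 * D.card := by
    have h1 : n^N ≤ ∑ q ∈ Qset, (fiber q).card := by
      calc n^N = (Finset.univ : Finset (Fin N → G)).card := by
            rw [Finset.card_univ, Fintype.card_fun, Fintype.card_fin, hn]
        _ ≤ (Qset.biUnion fiber).card := Finset.card_le_card hcover
        _ ≤ ∑ q ∈ Qset, (fiber q).card := Finset.card_biUnion_le
    have h2 : n^N * n^2 ≤ (N^3 * D.card) * n^N := by
      calc n^N * n^2 ≤ (∑ q ∈ Qset, (fiber q).card) * n^2 :=
            Nat.mul_le_mul_right _ h1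
        _ = ∑ q ∈ Qset, (fiber q).card * n^2 := by rw [Finset.sum_mul]
        _ ≤ ∑ q ∈ Qset, n^N := Finset.sum_le_sum hfibcard
        _ = Qset.card * n^N := by rw [Finset.sum_const, smul_eq_mul]
        _ ≤ (N^3 * D.card) * n^N := Nat.mul_le_mul_right _ hQcard
    have hpow : 0 < n^N := Nat.pow_pos hnpos
    have h3 : n^2 * n^N ≤ (N^3 * D.card) * n^N := by
      rw [mul_comm]; exact h2
    exact Nat.le_of_mul_le_mul_right h3 hpow
  -- pigeonhole over colors
  have hsplit : D.card = ∑ t : Fin k, (D.filter (fun p => c p.1 = t)).card :=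
    Finset.card_eq_sum_card_fiberwise (fun p _ => Finset.mem_univ (c p.1))
  have hex : ∃ t : Fin k, D.card ≤ k * (D.filter (fun p => c p.1 = t)).card := by
    by_contra hcon
    push_neg at hcon
    haveI : Nonempty (Fin k) := ⟨⟨0, hk⟩⟩
    have hlt : ∑ t : Fin k, k * (D.filter (fun p => c p.1 = t)).card <
        ∑ _t : Fin k, D.card :=
      Finset.sum_lt_sum_of_nonempty Finset.univ_nonempty (fun t _ => hcon t)
    rw [← Finset.mul_sum, ← hsplit, Finset.sum_const, Finset.card_univ,
      Fintype.card_fin, smul_eq_mul] at hlt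
    omega
  obtain ⟨t, ht⟩ := hex
  refine ⟨t, ?_⟩
  have hcard : Nat.card {p : G × G × G //
      c p.1 = t ∧ c p.2.1 = t ∧ c p.2.2 = t ∧ p.1 * p.2.1 = p.2.2} =
      (D.filter (fun p => c p.1 = t)).card := by
    rw [Nat.card_eq_fintype_card, Fintype.card_subtype]
    congr 1
    ext p
    simp only [Finset.mem_filter, Finset.mem_univ, true_and, hD]
    constructor
    · rintro ⟨h1, h2, h3, h4⟩
      exact ⟨⟨⟨h1.trans h2.symm, h2.trans h3.symm⟩, h4⟩, h1⟩
    · rintro ⟨⟨⟨e1, e2⟩, e3⟩, e4⟩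
      exact ⟨e4, e1.symm.trans e4, e2.symm.trans (e1.symm.trans e4), e3⟩
  rw [hcard]
  have hfinal : n^2 ≤ (k * N^3) * (D.filter (fun p => c p.1 = t)).card := by
    calc n^2 ≤ N^3 * D.card := hmain
      _ ≤ N^3 * (k * (D.filter (fun p => c p.1 = t)).card) :=
          Nat.mul_le_mul_left _ ht
      _ = (k * N^3) * (D.filter (fun p => c p.1 = t)).card := by ring
  have hcast : (n:ℝ)^2 ≤ ((k:ℝ) * (N:ℝ)^3) * ((D.filter (fun p => c p.1 = t)).card : ℝ) := by
    exact_mod_cast hfinal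
  rw [one_div, inv_mul_le_iff₀ hposR]
  exact hcast
end
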